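/- arXiv:1210.7460 — 8 statements merged into one kernel-verified Lean document; each statement's English description precedes it below -/
import Mathlib

section
/- Every bounded pure subgroup M of an abelian group N is a direct summand of N, i.e., there exists a subgroup C of N with N = M ⊕ C (M ∩ C = 0 and M + C = N). -/
universe u

theorem aux_bounded_pure (n : ℕ) : 1 ≤ n → ∀ {N : Type u} [AddCommGroup N] (M : AddSubgroup N),
    (∀ x ∈ M, n • x = 0) →
    (∀ m : ℕ, 1 ≤ m → ∀ x ∈ M, (∃ y : N, m • y = x) → ∃ z ∈ M, m • z = x) →
    ∃ C : AddSubgroup N, M ⊓ C = ⊥ ∧ M ⊔ C = ⊤ := by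
  induction n using Nat.strong_induction_on with
  | _ n ih =>
  intro hn N _ M hbound hpure
  rcases eq_or_lt_of_le hn with h1 | h2
  · -- n = 1 : M = ⊥
    refine ⟨⊤, ?_, by simp⟩
    have : M = ⊥ := by
      ext x
      simp only [AddSubgroup.mem_bot]
      constructor
      · intro hx
        have := hbound x hx
        rw [← h1] at this
        simpa using this
      · rintro rfl; exact M.zero_mem
    simp [this]
  · -- n ≥ 2
    set p := n.minFac with hpdef
    have hn1 : n ≠ 1 := by omega
    have hp : p.Prime := Nat.minFac_prime hn1
    have hpdvd : p ∣ n := Nat.minFac_dvd n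
    obtain ⟨t, htp⟩ := hpdvd
    have hp2 : 2 ≤ p := hp.two_le
    have ht1 : 1 ≤ t := by
      rcases Nat.eq_zero_or_pos t with h | h
      · subst h; rw [Nat.mul_zero] at htp; omega
      · exact h
    have htn : t < n := by nlinarith
    -- the multiplication-by-p homomorphism
    set φ : N →+ N := AddMonoidHom.mk' (fun x => p • x) (fun a b => smul_add p a b) with hφ
    set pN : AddSubgroup N := φ.range with hpN
    set pM : AddSubgroup N := M.map φ with hpM
    have hmem_pN : ∀ x : N, p • x ∈ pN := fun x => ⟨x, rfl⟩
    have hmem_pM : ∀ x ∈ M, p • x ∈ pM := fun x hx => ⟨x, hx, rfl⟩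
    -- pM as a subgroup of pN
    set MP : AddSubgroup ↥pN := pM.addSubgroupOf pN with hMP
    have hbound' : ∀ x ∈ MP, t • x = 0 := by
      rintro x hx
      rw [AddSubgroup.mem_addSubgroupOf] at hx
      obtain ⟨m₀, hm₀, hm₀eq⟩ := hx
      apply Subtype.ext
      push_cast
      show t • (x : N) = 0
      rw [← hm₀eq]
      show t • p • m₀ = 0
      rw [smul_smul, Nat.mul_comm]
      have hb := hbound m₀ hm₀
      rw [htp] at hb
      exact hb
    have hpure' : ∀ m : ℕ, 1 ≤ m → ∀ x ∈ MP, (∃ y : ↥pN, m • y = x) → ∃ z ∈ MP, m • z = x := by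
      rintro m hm x hx ⟨y, hy⟩
      rw [AddSubgroup.mem_addSubgroupOf] at hx
      obtain ⟨m₀, hm₀, hm₀eq⟩ := hx
      obtain ⟨w, hw⟩ := y.2
      have hxM : (x : N) ∈ M := by
        rw [← hm₀eq]; exact M.nsmul_mem hm₀ p
      have hdiv : ∃ y' : N, (m * p) • y' = (x : N) := by
        refine ⟨w, ?_⟩
        have : (x : N) = m • (y : N) := by
          rw [← hy]; push_cast; rfl
        rw [this, ← hw]
        show (m * p) • w = m • p • w
        rw [smul_smul]
      obtain ⟨z, hzM, hz⟩ := hpure (m * p) (Nat.mul_pos hm (by omega)) (x : N) hxM hdiv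
      refine ⟨⟨p • z, hmem_pN z⟩, ?_, ?_⟩
      · rw [AddSubgroup.mem_addSubgroupOf]
        exact hmem_pM z hzM
      · apply Subtype.ext
        show m • p • z = (x : N)
        rw [smul_smul]
        exact hz
    obtain ⟨C₁', hinf', hsup'⟩ := ih t htn ht1 MP hbound' hpure'
    set C₁ : AddSubgroup N := C₁'.map pN.subtype with hC₁
    have hC₁pN : C₁ ≤ pN := by
      rintro x ⟨x', _, rfl⟩
      exact x'.2
    -- purity gives M ⊓ pN ≤ pM
    have hMpN : ∀ x ∈ M, x ∈ pN → x ∈ pM := by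
      rintro x hxM ⟨y, hy⟩
      obtain ⟨z, hzM, hz⟩ := hpure p (by omega) x hxM ⟨y, hy⟩
      exact ⟨z, hzM, hz⟩
    have hMC₁ : M ⊓ C₁ = ⊥ := by
      rw [AddSubgroup.eq_bot_iff_forall]
      intro x hx
      rw [AddSubgroup.mem_inf] at hx
      obtain ⟨hxM, hxC₁⟩ := hx
      obtain ⟨x', hx', hx'eq⟩ := hxC₁
      have hxpM : x ∈ pM := hMpN x hxM (hC₁pN ⟨x', hx', hx'eq⟩)
      have hx'MP : x' ∈ MP := by
        rw [hMP, AddSubgroup.mem_addSubgroupOf]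
        show (x' : N) ∈ pM
        rw [show (x' : N) = x from hx'eq]
        exact hxpM
      have hmem : x' ∈ MP ⊓ C₁' := AddSubgroup.mem_inf.mpr ⟨hx'MP, hx'⟩
      rw [hinf'] at hmem
      have hx0 : x' = 0 := AddSubgroup.mem_bot.mp hmem
      rw [← hx'eq, hx0]
      simp
    -- decomposition of pN
    have hdecomp : ∀ w ∈ pN, ∃ y ∈ pM, ∃ z ∈ C₁, y + z = w := by
      intro w hw
      have : (⟨w, hw⟩ : ↥pN) ∈ MP ⊔ C₁' := by rw [hsup']; trivial
      obtain ⟨y', hy', z', hz', hyz⟩ := AddSubgroup.mem_sup.mp this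
      rw [AddSubgroup.mem_addSubgroupOf] at hy'
      refine ⟨(y' : N), hy', (z' : N), ⟨z', hz', rfl⟩, ?_⟩
      have := congrArg (fun v : ↥pN => (v : N)) hyz
      simpa using this
    -- Zorn's lemma
    set S : Set (AddSubgroup N) := {C | C₁ ≤ C ∧ M ⊓ C = ⊥} with hS
    have hzorn : ∀ c ⊆ S, IsChain (· ≤ ·) c → ∀ y ∈ c, ∃ ub ∈ S, ∀ z ∈ c, z ≤ ub := by
      intro c hcS hchain y hy
      refine ⟨sSup c, ⟨?_, ?_⟩, fun z hz => le_sSup hz⟩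
      · exact le_trans (hcS hy).1 (le_sSup hy)
      · rw [AddSubgroup.eq_bot_iff_forall]
        intro x hx
        rw [AddSubgroup.mem_inf] at hx
        obtain ⟨hxM, hxsup⟩ := hx
        obtain ⟨D, hD, hxD⟩ :=
          (AddSubgroup.mem_sSup_of_directedOn ⟨y, hy⟩ hchain.directedOn).mp hxsup
        have hmem : x ∈ M ⊓ D := AddSubgroup.mem_inf.mpr ⟨hxM, hxD⟩
        rw [(hcS hD).2] at hmem
        exact AddSubgroup.mem_bot.mp hmem
    obtain ⟨C, hC₁C, hCS, hCmax⟩ := zorn_le_nonempty₀ S hzorn C₁ ⟨le_rfl, hMC₁⟩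
    refine ⟨C, hCS.2, ?_⟩
    by_contra hne
    have : ∃ x : N, x ∉ M ⊔ C := by
      by_contra hall
      push_neg at hall
      exact hne (by rwa [AddSubgroup.eq_top_iff'])
    obtain ⟨x, hx⟩ := this
    -- px ∈ pN = pM ⊔ C₁
    obtain ⟨y, hypM, z, hzC₁, hyz⟩ := hdecomp (p • x) (hmem_pN x)
    obtain ⟨m₁, hm₁M, hm₁eq⟩ := hypM
    set x₂ : N := x - m₁ with hx₂def
    have hpx₂ : p • x₂ = z := by
      have h' : p • m₁ + z = p • x := by
        rw [← hyz, ← hm₁eq]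
        rfl
      rw [hx₂def, smul_sub, ← h']
      abel
    have hx₂ : x₂ ∉ M ⊔ C := by
      intro hmem
      apply hx
      have : x = x₂ + m₁ := by rw [hx₂def]; abel
      rw [this]
      exact (M ⊔ C).add_mem hmem (AddSubgroup.mem_sup_left hm₁M)
    have hzC : z ∈ C := hC₁C hzC₁
    have hkey : ∀ j : ℤ, j • x₂ ∈ M ⊔ C → (p : ℤ) ∣ j := by
      intro j hj
      by_contra hndvd
      have hcop : IsCoprime (p : ℤ) j :=
        (Nat.prime_iff_prime_int.mp hp).coprime_iff_not_dvd.mpr hndvd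
      obtain ⟨a, b, hab⟩ := hcop
      have : x₂ = a • ((p : ℤ) • x₂) + b • (j • x₂) := by
        rw [smul_smul, smul_smul, ← add_smul, hab, one_smul]
      rw [this] at hx₂
      apply hx₂
      apply (M ⊔ C).add_mem
      · apply AddSubgroup.zsmul_mem
        apply AddSubgroup.mem_sup_right
        rw [natCast_zsmul, hpx₂]
        exact hzC
      · exact AddSubgroup.zsmul_mem _ hj b
    -- maximality contradiction
    set C' : AddSubgroup N := C ⊔ AddSubgroup.zmultiples x₂ with hC'
    have hx₂C' : x₂ ∈ C' := AddSubgroup.mem_sup_right (AddSubgroup.mem_zmultiples x₂)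
    have hC'notS : C' ∉ S := by
      intro hC'S
      have hCC' : C ≤ C' := le_sup_left
      have := hCmax hC'S hCC'
      apply hx₂
      exact AddSubgroup.mem_sup_right (this hx₂C')
    have hMC' : M ⊓ C' ≠ ⊥ := by
      intro h
      exact hC'notS ⟨le_trans (le_trans hC₁C le_sup_left) le_rfl, h⟩
    have : ∃ w ∈ M ⊓ C', w ≠ 0 := by
      by_contra hall
      push_neg at hall
      exact hMC' (AddSubgroup.eq_bot_iff_forall _ |>.mpr hall)
    obtain ⟨w, ⟨hwM, hwC'⟩, hwne⟩ := this
    obtain ⟨c, hcC, v, hvZ, hcv⟩ := AddSubgroup.mem_sup.mp hwC'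
    obtain ⟨j, hj⟩ := AddSubgroup.mem_zmultiples_iff.mp hvZ
    have hjx₂ : j • x₂ ∈ M ⊔ C := by
      have : j • x₂ = w - c := by rw [hj, ← hcv]; abel
      rw [this]
      exact AddSubgroup.sub_mem _ (AddSubgroup.mem_sup_left hwM) (AddSubgroup.mem_sup_right hcC)
    obtain ⟨s, hs⟩ := hkey j hjx₂
    have hjC : j • x₂ ∈ C := by
      rw [hs, mul_comm ((p : ℤ)) s, mul_smul, natCast_zsmul, hpx₂]
      exact C.zsmul_mem hzC s
    have hwMC : w ∈ M ⊓ C :=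
      AddSubgroup.mem_inf.mpr ⟨hwM, by rw [← hcv, ← hj]; exact C.add_mem hcC hjC⟩
    rw [hCS.2] at hwMC
    exact hwne (AddSubgroup.mem_bot.mp hwMC)

/-- Every bounded pure subgroup `M` of an abelian group `N` is a direct
summand of `N`: there is a subgroup `C` of `N` with `M ∩ C = 0` and `M + C = N`.
Here `M` is bounded means `n • M = 0` for some `n ≥ 1`, and `M` is pure means
`M ∩ mN = mM` for all `m ≥ 1` (the nontrivial inclusion being `M ∩ mN ⊆ mM`). -/
theorem bounded_pure_subgroup_is_direct_summand
    {N : Type u} [AddCommGroup N] (M : AddSubgroup N)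
    (n : ℕ) (hn : 1 ≤ n) (hbound : ∀ x ∈ M, n • x = 0)
    (hpure : ∀ m : ℕ, 1 ≤ m → ∀ x ∈ M, (∃ y : N, m • y = x) → ∃ z ∈ M, m • z = x) :
    ∃ C : AddSubgroup N, M ⊓ C = ⊥ ∧ M ⊔ C = ⊤ := by
  exact aux_bounded_pure n hn M hbound hpure
end

section
/- Let B and C be subgroups of an abelian group A with C ∩ B = 0, and assume C is maximal among the subgroups of A whose intersection with B is 0. Let p be a prime and a ∈ A. If pa ∈ C, then a ∈ B + C. -/
universe u

/-- Let `B` and `C` be subgroups of an abelian group `A` with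
`C ∩ B = 0`, and assume `C` is maximal among the subgroups of `A` whose intersection
with `B` is `0`.  Let `p` be a prime and `a ∈ A`.  If `p • a ∈ C`, then `a ∈ B + C`. -/
theorem mem_sup_of_prime_smul_mem
    {A : Type u} [AddCommGroup A] (B C : AddSubgroup A)
    (hCB : C ⊓ B = ⊥)
    (hmax : ∀ C' : AddSubgroup A, C ≤ C' → C' ⊓ B = ⊥ → C' = C)
    (p : ℕ) (hp : p.Prime) (a : A) (ha : p • a ∈ C) :
    a ∈ B ⊔ C := by
  set C' : AddSubgroup A := C ⊔ AddSubgroup.zmultiples a with hC'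
  by_cases hb : C' ⊓ B = ⊥
  · have : C' = C := hmax C' le_sup_left hb
    have haC : a ∈ C := by
      rw [← this]
      exact AddSubgroup.mem_sup_right (AddSubgroup.mem_zmultiples a)
    exact AddSubgroup.mem_sup_right haC
  · -- there is a nonzero element of C' ⊓ B
    have : ∃ b ∈ C' ⊓ B, b ≠ 0 := by
      by_contra h
      push_neg at h
      apply hb
      ext x
      simp only [AddSubgroup.mem_bot]
      exact ⟨fun hx => by by_contra hne; exact hne (h x hx),
        fun hx => hx ▸ zero_mem _⟩
    obtain ⟨b, hbmem, hbne⟩ := this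
    have hbB : b ∈ B := hbmem.2
    have hbC' : b ∈ C' := hbmem.1
    rw [hC', AddSubgroup.mem_sup] at hbC'
    obtain ⟨c, hcC, z, hz, hcz⟩ := hbC'
    obtain ⟨n, hn⟩ := AddSubgroup.mem_zmultiples_iff.mp hz
    -- b = c + n • a
    have hb_eq : b = c + n • a := by rw [← hcz, hn]
    have hnaBC : n • a ∈ B ⊔ C := by
      have : n • a = b + (-c) := by rw [hb_eq]; abel
      rw [this]
      exact add_mem (AddSubgroup.mem_sup_left hbB) (AddSubgroup.mem_sup_right (neg_mem hcC))
    have hpaC : (p : ℤ) • a ∈ C := by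
      rw [natCast_zsmul]; exact ha
    by_cases hdvd : (p : ℤ) ∣ n
    · -- then n • a ∈ C, so b ∈ C ⊓ B = ⊥, contradiction
      obtain ⟨k, hk⟩ := hdvd
      have hnaC : n • a ∈ C := by
        rw [hk, mul_comm, mul_zsmul]
        exact AddSubgroup.zsmul_mem C hpaC k
      have hbC : b ∈ C := by rw [hb_eq]; exact add_mem hcC hnaC
      have : b ∈ C ⊓ B := ⟨hbC, hbB⟩
      rw [hCB, AddSubgroup.mem_bot] at this
      exact absurd this hbne
    · -- gcd(p, n) = 1; Bezout
      have hcop : IsCoprime (p : ℤ) n := by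
        exact (Prime.coprime_iff_not_dvd (Int.prime_iff_natAbs_prime.mpr (by simpa using hp))).mpr hdvd
      obtain ⟨u, v, huv⟩ := hcop
      have : a = u • ((p : ℤ) • a) + v • (n • a) := by
        rw [smul_smul, smul_smul, ← add_zsmul, huv, one_zsmul]
      rw [this]
      exact add_mem (AddSubgroup.mem_sup_right (AddSubgroup.zsmul_mem C hpaC u))
        (AddSubgroup.zsmul_mem _ hnaBC v)
end

section
/- Let N be an abelian group, l a prime, n ≥ 1 an integer, and M a subgroup of N with M ∩ lⁿN = 0 that is maximal among subgroups with this property. Then M is a pure subgroup of N; more precisely, M ∩ lʳN ⊆ lʳM for every integer r ≥ 0. -/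
universe u

/-- Let `N` be an abelian group, `l` a prime, `n ≥ 1`, and `M` a
subgroup of `N` with `M ∩ lⁿN = 0` which is maximal among subgroups with this
property.  Then `M` is a pure subgroup of `N` (i.e. `M ∩ mN = mM` for all `m ≥ 1`,
the nontrivial inclusion being `M ∩ mN ⊆ mM`); more precisely,
`M ∩ lʳN ⊆ lʳM` for every integer `r ≥ 0`. -/
theorem maximal_subgroup_avoiding_lpow_is_pure
    {N : Type u} [AddCommGroup N] (l : ℕ) (hl : l.Prime) (n : ℕ) (hn : 1 ≤ n)
    (M : AddSubgroup N)
    (hM : ∀ x ∈ M, (∃ y : N, l ^ n • y = x) → x = 0)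
    (hmax : ∀ M' : AddSubgroup N, M ≤ M' →
      (∀ x ∈ M', (∃ y : N, l ^ n • y = x) → x = 0) → M' = M) :
    (∀ m : ℕ, 1 ≤ m → ∀ x ∈ M, (∃ y : N, m • y = x) → ∃ z ∈ M, m • z = x) ∧
    (∀ r : ℕ, ∀ x ∈ M, (∃ y : N, l ^ r • y = x) → ∃ z ∈ M, l ^ r • z = x) := by
  have hbound : ∀ v ∈ M, l ^ n • v = 0 := fun v hv => hM _ (nsmul_mem hv _) ⟨v, rfl⟩
  have key : ∀ r : ℕ, ∀ x ∈ M, (∃ y : N, l ^ r • y = x) → ∃ z ∈ M, l ^ r • z = x := by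
    intro r
    induction r with
    | zero =>
      rintro x hx ⟨y, hy⟩
      exact ⟨x, hx, by simpa using rfl⟩
    | succ r ih =>
      rintro x hx ⟨y, hy⟩
      rcases le_or_gt (r + 1) n with hrn | hrn
      · -- main case: r + 1 ≤ n
        set w := l ^ r • y with hw_def
        have hlw : l • w = x := by
          rw [hw_def, ← mul_smul, ← pow_succ']; exact hy
        obtain ⟨m₂, hm₂M, hlm₂, y₂, hy₂⟩ :
            ∃ m₂, m₂ ∈ M ∧ l • m₂ = x ∧ ∃ y₂ : N, l ^ r • y₂ = m₂ := by
          by_cases hwM : w ∈ M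
          · exact ⟨w, hwM, hlw, y, rfl⟩
          · have hne_forall : ¬ ∀ e ∈ M ⊔ AddSubgroup.zmultiples w,
                (∃ u : N, l ^ n • u = e) → e = 0 := by
              intro h
              exact hwM ((hmax _ le_sup_left h) ▸
                AddSubgroup.mem_sup_right (AddSubgroup.mem_zmultiples w))
            push_neg at hne_forall
            obtain ⟨e, heM', ⟨u, hu⟩, hne⟩ := hne_forall
            rw [AddSubgroup.mem_sup] at heM'
            obtain ⟨m, hm, z, hz, hsum⟩ := heM'
            obtain ⟨t, ht⟩ := AddSubgroup.mem_zmultiples_iff.mp hz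
            rw [← ht] at hsum
            -- hsum : m + t • w = e
            have hlzx : (l : ℤ) • w = x := by rw [natCast_zsmul]; exact hlw
            have hnd : ¬ ((l : ℤ) ∣ t) := by
              rintro ⟨t₁, rfl⟩
              refine hne (hM e ?_ ⟨u, hu⟩)
              have he : e = m + t₁ • x := by
                rw [← hsum, mul_comm, mul_smul, hlzx]
              rw [he]
              exact add_mem hm (zsmul_mem hx t₁)
            have hle : (l : ℕ) • m + t • x = l ^ (n + 1) • u := by
              calc l • m + t • x = l • m + t • (l • w) := by rw [hlw]
                _ = l • m + l • (t • w) := by rw [smul_comm]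
                _ = l • (m + t • w) := by rw [smul_add]
                _ = l • e := by rw [hsum]
                _ = l ^ (n + 1) • u := by rw [← hu, ← mul_smul, ← pow_succ']
            have hlnu : l ^ (n + 1) • u = 0 := by
              refine hM _ ?_ ⟨l • u, by rw [← mul_smul, ← pow_succ]⟩
              exact hle ▸ add_mem (nsmul_mem hm l) (zsmul_mem hx t)
            have htx : t • x = -((l : ℕ) • m) :=
              eq_neg_of_add_eq_zero_left (by rw [add_comm, hle, hlnu])
            have hprime : Prime (l : ℤ) := Nat.prime_iff_prime_int.mp hl
            have hcop : IsCoprime t ((l : ℤ) ^ (n + 1)) :=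
              ((hprime.coprime_iff_not_dvd.mpr hnd).symm).pow_right
            obtain ⟨c, d, hcd⟩ := hcop
            -- x = l • (-(c • m))
            have hlnx : ((l : ℤ) ^ (n + 1)) • x = 0 := by
              have : ((l : ℤ) ^ (n + 1)) • x = l ^ (n + 1) • x := by
                rw [← natCast_zsmul, Nat.cast_pow]
              rw [this, pow_succ', mul_smul, hbound x hx, smul_zero]
            have hx_eq : l • (-(c • m)) = x := by
              have h1 : x = (c * t) • x + (d * (l : ℤ) ^ (n + 1)) • x := by
                rw [← add_smul, hcd, one_smul]
              rw [mul_smul, mul_smul, hlnx, smul_zero, add_zero, htx] at h1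
              rw [h1, smul_neg, smul_neg, smul_comm]
            have hwl : ((l : ℤ) ^ (n + 1)) • w = 0 := by
              have h2 : ((l : ℤ) ^ (n + 1)) • w = l ^ (n + 1) • w := by
                rw [← natCast_zsmul, Nat.cast_pow]
              rw [h2, hw_def, ← mul_smul]
              have h3 : l ^ (n + 1) * l ^ r = l ^ n * l ^ (r + 1) := by ring
              rw [h3, mul_smul, hy, hbound x hx]
            have hwct : (c * t) • w = w := by
              have h1 : w = (c * t) • w + (d * (l : ℤ) ^ (n + 1)) • w := by
                rw [← add_smul, hcd, one_smul]
              rw [mul_smul d, hwl, smul_zero, add_zero] at h1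
              exact h1.symm
            have hm₂_eq : -(c • m) = w - c • e := by
              have h1 : c • e - c • m = w := by
                rw [← smul_sub]
                have h2 : e - m = t • w := by rw [← hsum]; abel
                rw [h2, ← mul_smul]
                exact hwct
              rw [← h1]; abel
            refine ⟨-(c • m), neg_mem (zsmul_mem hm c), hx_eq,
              y - l ^ (n - r) • (c • u), ?_⟩
            have h4 : l ^ r * l ^ (n - r) = l ^ n := by
              rw [← pow_add, Nat.add_sub_cancel' (le_trans (Nat.le_succ r) hrn)]
            calc l ^ r • (y - l ^ (n - r) • (c • u))
                = l ^ r • y - (l ^ r * l ^ (n - r)) • (c • u) := by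
                  rw [smul_sub, mul_smul]
              _ = w - l ^ n • (c • u) := by rw [h4, hw_def]
              _ = w - c • (l ^ n • u) := by rw [smul_comm]
              _ = w - c • e := by rw [hu]
              _ = -(c • m) := hm₂_eq.symm
        obtain ⟨z, hzM, hzr⟩ := ih m₂ hm₂M ⟨y₂, hy₂⟩
        exact ⟨z, hzM, by rw [pow_succ', mul_smul, hzr, hlm₂]⟩
      · -- r + 1 > n : x = 0
        have hx0 : x = 0 := by
          refine hM x hx ⟨l ^ (r + 1 - n) • y, ?_⟩
          rw [← mul_smul, ← pow_add, Nat.add_sub_cancel' (le_of_lt hrn)]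
          exact hy
        exact ⟨0, zero_mem M, by simp [hx0]⟩
  refine ⟨?_, key⟩
  rintro m hm x hx ⟨y, hy⟩
  have hm0 : m ≠ 0 := Nat.one_le_iff_ne_zero.mp hm
  set r := m.factorization l with hr
  set k := m / l ^ r with hk
  have hfact : l ^ r * k = m := Nat.ordProj_mul_ordCompl_eq_self m l
  obtain ⟨z, hzM, hzr⟩ := key r x hx ⟨k • y, by rw [← mul_smul, hfact, hy]⟩
  have hndvd : ¬ ((l : ℤ) ∣ (k : ℤ)) := by
    rw [Int.natCast_dvd_natCast]
    exact Nat.not_dvd_ordCompl hl hm0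
  have hprime : Prime (l : ℤ) := Nat.prime_iff_prime_int.mp hl
  have hcop : IsCoprime ((k : ℤ)) ((l : ℤ) ^ n) :=
    ((hprime.coprime_iff_not_dvd.mpr hndvd).symm).pow_right
  obtain ⟨c, d, hcd⟩ := hcop
  have hlnz : ((l : ℤ) ^ n) • z = 0 := by
    have : ((l : ℤ) ^ n) • z = l ^ n • z := by rw [← natCast_zsmul, Nat.cast_pow]
    rw [this, hbound z hzM]
  have hz_eq : k • (c • z) = z := by
    have h1 : z = (c * (k : ℤ)) • z + (d * (l : ℤ) ^ n) • z := by
      rw [← add_smul, hcd, one_smul]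
    rw [mul_smul d, hlnz, smul_zero, add_zero, mul_comm, mul_smul, natCast_zsmul] at h1
    exact h1.symm
  exact ⟨c • z, zsmul_mem hzM c, by rw [← hfact, mul_smul, hz_eq, hzr]⟩
end

section
/- Let N be an abelian group, l a prime, and n ≥ 1 an integer. If M is a subgroup of N with M ∩ lⁿN = 0 and M is maximal among the subgroups with this property, then M is a direct summand of N, i.e., there exists a subgroup C of N with M ∩ C = 0 and M + C = N. -/
universe u

section Aux

variable {N : Type u} [AddCommGroup N]

/-- Multiplication by `k` as an additive hom. -/
private def smulHom (k : ℕ) : N →+ N := AddMonoidHom.mk' (fun x => k • x) (fun a b => smul_add k a b)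

@[simp] private lemma smulHom_apply (k : ℕ) (x : N) : smulHom k x = k • x := rfl

/-- n = 1 case, relative: if `A ≤ G` and `A ∩ lG = 0`, then `A` has a complement in `G`. -/
private lemma zorn_complement (l : ℕ) (hl : l.Prime) (G A : AddSubgroup N) (hAG : A ≤ G)
    (h : ∀ a ∈ A, (∃ g ∈ G, l • g = a) → a = 0) :
    ∃ C : AddSubgroup N, C ≤ G ∧ A ⊓ C = ⊥ ∧ A ⊔ C = G := by
  set S : Set (AddSubgroup N) :=
    {C | C ≤ G ∧ A ⊓ C = ⊥ ∧ ∀ g ∈ G, l • g ∈ C} with hS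
  have hC0 : G.map (smulHom (N := N) l) ∈ S := by
    refine ⟨?_, ?_, ?_⟩
    · rintro x ⟨g, hg, rfl⟩
      exact AddSubgroup.nsmul_mem G hg l
    · rw [eq_bot_iff]
      rintro x ⟨hxA, g, hg, rfl⟩
      simp only [AddSubgroup.mem_bot]
      exact h _ hxA ⟨g, hg, rfl⟩
    · intro g hg
      exact ⟨g, hg, rfl⟩
  obtain ⟨C, -, hCS, hCmax⟩ := zorn_le_nonempty₀ S
    (fun c hcS hchain y hy => by
      refine ⟨sSup c, ⟨?_, ?_, ?_⟩, fun z hz => le_sSup hz⟩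
      · exact sSup_le fun z hz => (hcS hz).1
      · rw [eq_bot_iff]
        intro x hx
        rw [AddSubgroup.mem_inf] at hx
        obtain ⟨s, hs, hxsmem⟩ :=
          (AddSubgroup.mem_sSup_of_directedOn ⟨y, hy⟩ hchain.directedOn).mp hx.2
        have hb := (hcS hs).2.1
        rw [eq_bot_iff] at hb
        exact hb (by rw [AddSubgroup.mem_inf]; exact ⟨hx.1, hxsmem⟩)
      · intro g hg
        exact (le_sSup hy) ((hcS hy).2.2 g hg)) _ hC0
  refine ⟨C, hCS.1, hCS.2.1, ?_⟩
  apply le_antisymm (sup_le hAG hCS.1)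
  intro x hxG
  by_contra hx
  set C' : AddSubgroup N := C ⊔ AddSubgroup.closure {x} with hC'
  have hxC' : x ∈ C' :=
    (le_sup_right : AddSubgroup.closure {x} ≤ C') (AddSubgroup.mem_closure_singleton_self x)
  have hCC' : C ≤ C' := le_sup_left
  have hxC : x ∉ C := fun hc => hx ((le_sup_right : C ≤ A ⊔ C) hc)
  have hC'S : C' ∉ S := by
    intro hmem
    exact hxC (hCmax hmem hCC' hxC')
  -- the only condition that can fail is the intersection one
  have hC'G : C' ≤ G := sup_le hCS.1 ((AddSubgroup.closure_le G).2 (by simpa using hxG))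
  have hsmulC' : ∀ g ∈ G, l • g ∈ C' := fun g hg => hCC' (hCS.2.2 g hg)
  have hint : ∃ a, a ∈ A ⊓ C' ∧ a ≠ 0 := by
    by_contra hno
    push_neg at hno
    refine hC'S ⟨hC'G, ?_, hsmulC'⟩
    rw [AddSubgroup.eq_bot_iff_forall]
    intro x hx
    exact hno x hx
  obtain ⟨a, haAC', ha0⟩ := hint
  rw [AddSubgroup.mem_inf] at haAC'
  obtain ⟨haA, haC'⟩ := haAC'
  rw [hC', AddSubgroup.mem_sup] at haC'
  obtain ⟨c, hc, w, hw, hcw⟩ := haC'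
  rw [AddSubgroup.mem_closure_singleton] at hw
  obtain ⟨j, rfl⟩ := hw
  have hlx : l • x ∈ C := hCS.2.2 x hxG
  by_cases hdvd : (l : ℤ) ∣ j
  · obtain ⟨t, rfl⟩ := hdvd
    have : (↑l * t) • x = t • (l • x) := by
      rw [mul_comm, mul_smul, natCast_zsmul]
    have haC : a ∈ C := by
      rw [← hcw, this]
      exact AddSubgroup.add_mem C hc (AddSubgroup.zsmul_mem C hlx t)
    have : a = 0 := by
      have hb := hCS.2.1
      rw [eq_bot_iff] at hb
      simpa using hb (by rw [AddSubgroup.mem_inf]; exact ⟨haA, haC⟩)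
    exact ha0 this
  · have hcop : IsCoprime (l : ℤ) j :=
      ((Nat.prime_iff_prime_int.mp hl).coprime_iff_not_dvd).2 hdvd
    obtain ⟨u, v, huv⟩ := hcop
    have hxmem : x ∈ A ⊔ C := by
      have hx1 : x = u • ((l : ℤ) • x) + v • (j • x) := by
        rw [smul_smul, smul_smul, ← add_smul, huv, one_smul]
      have h1 : (l : ℤ) • x ∈ C := by rwa [natCast_zsmul]
      have h2 : j • x ∈ A ⊔ C := by
        have : j • x = a + (-c) := by rw [← hcw]; abel
        rw [this]
        exact AddSubgroup.add_mem _ ((le_sup_left : A ≤ A ⊔ C) haA)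
          ((le_sup_right : C ≤ A ⊔ C) (neg_mem hc))
      rw [hx1]
      exact AddSubgroup.add_mem _
        ((le_sup_right : C ≤ A ⊔ C) (AddSubgroup.zsmul_mem C h1 u))
        (AddSubgroup.zsmul_mem _ h2 v)
    exact hx hxmem

/-- Relative bounded pure subgroup is a direct summand, by induction on the bound. -/
private lemma pure_bounded_summand (l : ℕ) (hl : l.Prime) :
    ∀ (n : ℕ) (G A : AddSubgroup N), A ≤ G →
    (∀ (k : ℕ) (a : N), a ∈ A → (∃ g ∈ G, l ^ k • g = a) → ∃ b ∈ A, l ^ k • b = a) →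
    (∀ a ∈ A, l ^ n • a = 0) →
    ∃ D : AddSubgroup N, D ≤ G ∧ A ⊓ D = ⊥ ∧ A ⊔ D = G := by
  intro n
  induction n with
  | zero =>
    intro G A hAG _ hbound
    have hA : A = ⊥ := by
      rw [AddSubgroup.eq_bot_iff_forall]
      intro a ha
      simpa using hbound a ha
    exact ⟨G, le_rfl, by simp [hA], by simp [hA, hAG]⟩
  | succ n ih =>
    intro G A hAG hpure hbound
    set Gm : AddSubgroup N := G.map (smulHom (N := N) l) with hGm
    set Am : AddSubgroup N := A.map (smulHom (N := N) l) with hAm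
    have hAmA : Am ≤ A := by rintro x ⟨a, ha, rfl⟩; exact AddSubgroup.nsmul_mem A ha l
    have hAmGm : Am ≤ Gm := AddSubgroup.map_mono hAG
    -- purity of Am in Gm
    have hpure' : ∀ (k : ℕ) (a : N), a ∈ Am → (∃ g ∈ Gm, l ^ k • g = a) →
        ∃ b ∈ Am, l ^ k • b = a := by
      intro k a haAm ⟨g', hg', hgeq⟩
      obtain ⟨g, hg, rfl⟩ := hg'
      have : l ^ (k + 1) • g = a := by
        rw [pow_succ, mul_smul]; exact hgeq
      obtain ⟨b, hb, hbeq⟩ := hpure (k + 1) a (hAmA haAm) ⟨g, hg, this⟩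
      refine ⟨l • b, ⟨b, hb, rfl⟩, ?_⟩
      rw [← hbeq, pow_succ, mul_smul]
    have hbound' : ∀ a ∈ Am, l ^ n • a = 0 := by
      rintro x ⟨a, ha, rfl⟩
      have := hbound a ha
      simp only [smulHom_apply]
      rw [← mul_smul, ← pow_succ]
      exact this
    obtain ⟨K, hKGm, hAmK, hsupK⟩ := ih Gm Am hAmGm hpure' hbound'
    set H : AddSubgroup N := G ⊓ K.comap (smulHom (N := N) l) with hH
    have hHG : H ≤ G := inf_le_left
    -- the l-torsion part of A inside H
    set S := A ⊓ H with hSdef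
    have hSH : S ≤ H := inf_le_right
    have hScond : ∀ s ∈ S, (∃ h ∈ H, l • h = s) → s = 0 := by
      rintro s hsS ⟨h', hh'H, rfl⟩
      rw [AddSubgroup.mem_inf] at hsS
      obtain ⟨hsA, hsH⟩ := hsS
      rw [AddSubgroup.mem_inf] at hh'H
      obtain ⟨h'G, h'K⟩ := hh'H
      have hsK : l • h' ∈ K := h'K
      have hsAm : l • h' ∈ Am := by
        obtain ⟨b, hb, hbeq⟩ := hpure 1 (l • h') hsA ⟨h', h'G, by rw [pow_one]⟩
        exact ⟨b, hb, by rw [← hbeq, pow_one]; rfl⟩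
      have hb := hAmK
      rw [eq_bot_iff] at hb
      simpa using hb (by rw [AddSubgroup.mem_inf]; exact ⟨hsAm, hsK⟩)
    obtain ⟨D, hDH, hSD, hSDsup⟩ := zorn_complement l hl H S hSH hScond
    refine ⟨D, hDH.trans hHG, ?_, ?_⟩
    · rw [eq_bot_iff]
      intro x hx
      rw [AddSubgroup.mem_inf] at hx
      have hxS : x ∈ S := by rw [hSdef, AddSubgroup.mem_inf]; exact ⟨hx.1, hDH hx.2⟩
      rw [eq_bot_iff] at hSD
      exact hSD (by rw [AddSubgroup.mem_inf]; exact ⟨hxS, hx.2⟩)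
    · apply le_antisymm (sup_le hAG (hDH.trans hHG))
      intro g hgG
      have hlg : l • g ∈ Gm := ⟨g, hgG, rfl⟩
      rw [← hsupK, AddSubgroup.mem_sup] at hlg
      obtain ⟨a', ha', k₀, hk₀, heq⟩ := hlg
      obtain ⟨a, haA, rfl⟩ := ha'
      simp only [smulHom_apply] at heq
      have hgaH : g - a ∈ H := by
        rw [hH, AddSubgroup.mem_inf]
        refine ⟨AddSubgroup.sub_mem G hgG (hAG haA), ?_⟩
        · show l • (g - a) ∈ K
          rw [smul_sub]
          have : l • g - l • a = k₀ := by
            rw [← heq]; abel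
          rwa [this]
      have : g = a + (g - a) := by abel
      rw [this]
      refine AddSubgroup.add_mem _ ((le_sup_left : A ≤ A ⊔ D) haA) ?_
      have : g - a ∈ S ⊔ D := by rw [hSDsup]; exact hgaH
      rw [AddSubgroup.mem_sup] at this
      obtain ⟨s, hs, d, hd, hsd⟩ := this
      rw [← hsd]
      have hsA : s ∈ A := (AddSubgroup.mem_inf.mp hs).1
      exact AddSubgroup.add_mem _ ((le_sup_left : A ≤ A ⊔ D) hsA)
        ((le_sup_right : D ≤ A ⊔ D) hd)

end Aux

/-- Let `N` be an abelian group, `l` a prime, and `n ≥ 1`.  If `M` is a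
subgroup of `N` with `M ∩ lⁿN = 0` and `M` is maximal among the subgroups with this
property, then `M` is a direct summand of `N`: there is a subgroup `C` of `N` with
`M ∩ C = 0` and `M + C = N`. -/
theorem maximal_subgroup_avoiding_lpow_is_direct_summand
    {N : Type u} [AddCommGroup N] (l : ℕ) (hl : l.Prime) (n : ℕ) (hn : 1 ≤ n)
    (M : AddSubgroup N)
    (hM : ∀ x ∈ M, (∃ y : N, l ^ n • y = x) → x = 0)
    (hmax : ∀ M' : AddSubgroup N, M ≤ M' →
      (∀ x ∈ M', (∃ y : N, l ^ n • y = x) → x = 0) → M' = M) :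
    ∃ C : AddSubgroup N, M ⊓ C = ⊥ ∧ M ⊔ C = ⊤ := by
  -- Step 1: M is pure in N
  have hpure : ∀ (k : ℕ) (a : N), a ∈ M → (∃ g : N, l ^ k • g = a) →
      ∃ b ∈ M, l ^ k • b = a := by
    intro k
    induction k with
    | zero =>
      intro a ha _
      exact ⟨a, ha, by simp⟩
    | succ k ih =>
      intro a haM ⟨y, hy⟩
      by_cases hkn : n ≤ k + 1
      · -- a ∈ lⁿN so a = 0
        have : a = 0 := by
          apply hM a haM
          refine ⟨l ^ (k + 1 - n) • y, ?_⟩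
          rw [← mul_smul, ← pow_add, Nat.add_sub_cancel' hkn]
          exact hy
        exact ⟨0, AddSubgroup.zero_mem M, by simp [this]⟩
      · push_neg at hkn
        have hkln : k < n := by omega
        set z : N := l ^ k • y with hz
        have hlz : l • z = a := by
          rw [hz, ← mul_smul, ← pow_succ']
          exact hy
        by_cases hzM : z ∈ M
        · obtain ⟨b, hb, hbeq⟩ := ih z hzM ⟨y, rfl⟩
          exact ⟨b, hb, by rw [pow_succ', mul_smul, hbeq, hlz]⟩
        · -- use maximality of M
          set M' : AddSubgroup N := M ⊔ AddSubgroup.closure {z} with hM'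
          have hMM' : M ≤ M' := le_sup_left
          have hzM' : z ∈ M' :=
            (le_sup_right : AddSubgroup.closure {z} ≤ M') (AddSubgroup.mem_closure_singleton_self z)
          have hne : ¬ (∀ x ∈ M', (∃ y : N, l ^ n • y = x) → x = 0) := by
            intro hcond
            exact hzM (hmax M' hMM' hcond ▸ hzM')
          push_neg at hne
          obtain ⟨x, hxM', ⟨y', hy'⟩, hx0⟩ := hne
          rw [hM', AddSubgroup.mem_sup] at hxM'
          obtain ⟨m', hm', w, hw, hmw⟩ := hxM'
          rw [AddSubgroup.mem_closure_singleton] at hw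
          obtain ⟨j, rfl⟩ := hw
          by_cases hdvd : (l : ℤ) ∣ j
          · obtain ⟨t, rfl⟩ := hdvd
            have hjz : (↑l * t) • z = t • a := by
              rw [mul_comm, mul_smul, natCast_zsmul, hlz]
            have hxM : x ∈ M := by
              rw [← hmw, hjz]
              exact AddSubgroup.add_mem M hm' (AddSubgroup.zsmul_mem M haM t)
            exact absurd (hM x hxM ⟨y', hy'⟩) hx0
          · have hcop : IsCoprime (l : ℤ) j :=
              ((Nat.prime_iff_prime_int.mp hl).coprime_iff_not_dvd).2 hdvd
            obtain ⟨u, v, huv⟩ := hcop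
            have hzdecomp : z = u • a + v • (j • z) := by
              have h2 : (u * (l : ℤ)) • z = u • a := by
                rw [mul_smul, natCast_zsmul, hlz]
              calc z = (1 : ℤ) • z := (one_smul ℤ z).symm
                _ = (u * (l : ℤ) + v * j) • z := by rw [huv]
                _ = (u * (l : ℤ)) • z + (v * j) • z := add_smul _ _ _
                _ = u • a + v • (j • z) := by rw [h2, mul_smul]
            have hjzx : j • z = x - m' := by rw [← hmw]; abel
            -- m'' := z - v • x ∈ M
            have hm''M : z - v • x ∈ M := by
              have : z - v • x = u • a + (- (v • m')) := by
                rw [hzdecomp, hjzx, smul_sub]; abel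
              rw [this]
              exact AddSubgroup.add_mem M (AddSubgroup.zsmul_mem M haM u)
                (AddSubgroup.neg_mem M (AddSubgroup.zsmul_mem M hm' v))
            -- m'' ∈ l^k N
            have hm''div : ∃ g : N, l ^ k • g = z - v • x := by
              refine ⟨y - v • (l ^ (n - k) • y'), ?_⟩
              rw [smul_sub]
              congr 1
              rw [smul_comm, ← mul_smul, ← pow_add, Nat.add_sub_cancel' (le_of_lt hkln), hy']
            obtain ⟨b, hbM, hbeq⟩ := ih (z - v • x) hm''M hm''div
            -- now a - l^(k+1) • b ∈ M ∩ lⁿN = 0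
            have key : a - l ^ (k + 1) • b = l ^ n • (v • (l • y')) := by
              have h1 : l ^ (k + 1) • b = l • (z - v • x) := by
                rw [pow_succ', mul_smul, hbeq]
              rw [h1, smul_sub, hlz, smul_comm (l : ℕ) v x, ← hy']
              rw [smul_comm (l ^ n) v (l • y'), smul_comm (l : ℕ) (l ^ n) y']
              abel
            have hmem : a - l ^ (k + 1) • b ∈ M :=
              AddSubgroup.sub_mem M haM (AddSubgroup.nsmul_mem M hbM _)
            have hzero : a - l ^ (k + 1) • b = 0 :=
              hM _ hmem ⟨v • (l • y'), key.symm⟩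
            exact ⟨b, hbM, (sub_eq_zero.mp hzero).symm⟩
  -- Step 2: M is bounded
  have hbound : ∀ a ∈ M, l ^ n • a = 0 := by
    intro a ha
    exact hM _ (AddSubgroup.nsmul_mem M ha _) ⟨a, rfl⟩
  -- Step 3: apply the pure bounded summand theorem
  obtain ⟨D, -, hMD, hMDsup⟩ := pure_bounded_summand l hl n ⊤ M le_top
    (fun k a ha ⟨g, _, hg⟩ => hpure k a ha ⟨g, hg⟩) hbound
  exact ⟨D, hMD, hMDsup⟩
end

section
/- Let M be an abelian group such that the quotient M/nM is finite for every integer n ≥ 1. Then the first Ulm subgroup of M equals the largest divisible subgroup of M: U(M) = M_div. Equivalently, under this hypothesis the subgroup ⋂_{n ≥ 1} nM is a divisible group. -/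
universe u

/-- The first Ulm subgroup `U(M) = ⋂_{n ≥ 1} nM` of an abelian group `M`. -/
def ulmSubgroup (M : Type u) [AddCommGroup M] : AddSubgroup M where
  carrier := {x | ∀ n : ℕ, 1 ≤ n → ∃ y : M, n • y = x}
  zero_mem' := fun n _ => ⟨0, smul_zero n⟩
  add_mem' := by
    rintro a b ha hb n hn
    obtain ⟨y, hy⟩ := ha n hn
    obtain ⟨z, hz⟩ := hb n hn
    exact ⟨y + z, by rw [smul_add, hy, hz]⟩
  neg_mem' := by
    rintro a ha n hn
    obtain ⟨y, hy⟩ := ha n hn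
    exact ⟨-y, by rw [smul_neg, hy]⟩

/-- The subgroup `nM = {n • x : x ∈ M}` of an abelian group `M`. -/
def smulRange (n : ℕ) (M : Type u) [AddCommGroup M] : AddSubgroup M where
  carrier := Set.range fun x : M => n • x
  zero_mem' := ⟨0, smul_zero n⟩
  add_mem' := by rintro _ _ ⟨a, rfl⟩ ⟨b, rfl⟩; exact ⟨a + b, smul_add n a b⟩
  neg_mem' := by rintro _ ⟨a, rfl⟩; exact ⟨-a, smul_neg n a⟩

/-- A subgroup `D` of an abelian group is divisible if `nD = D` for all `n ≥ 1`. -/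
def IsDivisibleSubgroup {M : Type u} [AddCommGroup M] (D : AddSubgroup M) : Prop :=
  ∀ n : ℕ, 1 ≤ n → ∀ x ∈ D, ∃ y ∈ D, n • y = x

section Aux

variable {M : Type u} [AddCommGroup M]

lemma mem_smulRange {n : ℕ} {x : M} : x ∈ smulRange n M ↔ ∃ y : M, n • y = x := Iff.rfl

lemma mem_ulmSubgroup {x : M} :
    x ∈ ulmSubgroup M ↔ ∀ n : ℕ, 1 ≤ n → ∃ y : M, n • y = x := Iff.rfl

lemma smulRange_anti {a b : ℕ} (h : a ∣ b) : smulRange b M ≤ smulRange a M := by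
  rintro _ ⟨y, rfl⟩
  obtain ⟨c, rfl⟩ := h
  exact ⟨c • y, (mul_smul a c y).symm⟩

lemma exists_smul_eq_of_coprime {a b : ℕ} (h : Nat.Coprime a b) {x : M}
    (ha : ∃ u : M, a • u = x) (hb : ∃ v : M, b • v = x) : ∃ w : M, (a * b) • w = x := by
  obtain ⟨u, hu⟩ := ha
  obtain ⟨v, hv⟩ := hb
  obtain ⟨s, t, hst⟩ := h.isCoprime
  refine ⟨s • v + t • u, ?_⟩
  have hu' : (a : ℤ) • u = x := by rw [natCast_zsmul]; exact hu
  have hv' : (b : ℤ) • v = x := by rw [natCast_zsmul]; exact hv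
  have hx : (s * (a : ℤ)) • x + (t * (b : ℤ)) • x = x := by
    rw [← add_smul, hst, one_smul]
  have : ((a : ℤ) * (b : ℤ)) • (s • v + t • u) = x := by
    linear_combination (norm := module) (s * (a : ℤ)) • hv' + (t * (b : ℤ)) • hu' + hx
  calc (a * b) • (s • v + t • u) = ((a * b : ℕ) : ℤ) • (s • v + t • u) := (natCast_zsmul _ _).symm
    _ = ((a : ℤ) * (b : ℤ)) • (s • v + t • u) := by push_cast; ring_nf
    _ = x := this

lemma torsion_smul_of_coprime {a b : ℕ} (h : Nat.Coprime a b) {t : M} (ht : a • t = 0) :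
    ∃ w : M, b • w = t := by
  obtain ⟨s, r, hsr⟩ := h.isCoprime
  refine ⟨r • t, ?_⟩
  have ht' : (a : ℤ) • t = 0 := by rw [natCast_zsmul, ht]
  calc (b : ℕ) • (r • t) = ((b : ℤ)) • (r • t) := (natCast_zsmul _ _).symm
    _ = (r * (b : ℤ)) • t := by rw [smul_smul, mul_comm]
    _ = (s * (a : ℤ) + r * (b : ℤ)) • t := by
        rw [add_smul, mul_smul s, ht', smul_zero, zero_add]
    _ = t := by rw [hsr, one_smul]

end Aux

section Main

variable {M : Type u} [AddCommGroup M]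

lemma prime_pow_descent (hfin : ∀ n : ℕ, 1 ≤ n → Finite (M ⧸ smulRange n M))
    {p : ℕ} (hp : p.Prime) {x : M} (hx : ∀ k : ℕ, x ∈ smulRange (p ^ k) M) :
    ∃ y : M, p • y = x ∧ ∀ k : ℕ, y ∈ smulRange (p ^ k) M := by
  set P : ℕ → AddSubgroup M := fun k => smulRange (p ^ k) M with hP
  have Hfin : ∀ k : ℕ, Finite (M ⧸ P k) := fun k =>
    hfin _ (Nat.one_le_pow _ _ hp.pos)
  set f : M →+ M := AddMonoidHom.mk' (fun m => p • m) (fun a b => smul_add p a b) with hf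
  have f_apply : ∀ m : M, f m = p • m := fun _ => rfl
  have hcomap : ∀ k : ℕ, P (k + 1) ≤ (P (k + 2)).comap f := by
    rintro k _ ⟨y, rfl⟩
    exact ⟨y, by rw [f_apply, smul_smul, ← pow_succ']⟩
  set ψ : ∀ k : ℕ, (M ⧸ P (k + 1)) →+ (M ⧸ P (k + 2)) :=
    fun k => QuotientAddGroup.map _ _ f (hcomap k) with hψ
  set Sg : ∀ k : ℕ, AddSubgroup (M ⧸ P (k + 1)) :=
    fun k => (P k).map (QuotientAddGroup.mk' (P (k + 1))) with hSg
  have hmaps : ∀ k : ℕ, ∀ a, a ∈ Sg k → ψ k a ∈ Sg (k + 1) := by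
    rintro k a ⟨m, ⟨z, rfl⟩, rfl⟩
    refine ⟨p ^ (k + 1) • z, ⟨z, rfl⟩, ?_⟩
    rw [QuotientAddGroup.mk'_apply, QuotientAddGroup.mk'_apply, QuotientAddGroup.map_mk,
      f_apply, smul_smul, ← pow_succ']
  have hsurj : ∀ k : ℕ, ∀ b, b ∈ Sg (k + 1) → ∃ a ∈ Sg k, ψ k a = b := by
    rintro k _ ⟨m, ⟨z, rfl⟩, rfl⟩
    refine ⟨QuotientAddGroup.mk' (P (k + 1)) (p ^ k • z), ⟨p ^ k • z, ⟨z, rfl⟩, rfl⟩, ?_⟩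
    rw [QuotientAddGroup.mk'_apply, QuotientAddGroup.mk'_apply, QuotientAddGroup.map_mk,
      f_apply, smul_smul, ← pow_succ']
  set c : ℕ → ℕ := fun k => Nat.card (Sg k) with hc
  have hstep : ∀ k : ℕ, c (k + 1) ≤ c k := by
    intro k
    have : Finite (M ⧸ P (k + 1)) := Hfin _
    exact Nat.card_le_card_of_surjective
      (fun a : Sg k => (⟨ψ k a, hmaps k a a.2⟩ : Sg (k + 1)))
      (fun b => by
        obtain ⟨a, ha, hab⟩ := hsurj k b b.2
        exact ⟨⟨a, ha⟩, Subtype.ext hab⟩)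
  have hanti : Antitone c := antitone_nat_of_succ_le hstep
  obtain ⟨K, hK⟩ : sInf (Set.range c) ∈ Set.range c := Nat.sInf_mem ⟨c 0, 0, rfl⟩
  have hstab : ∀ k : ℕ, K ≤ k → c k = c K := by
    intro k hk
    exact le_antisymm (hanti hk) (hK ▸ Nat.sInf_le ⟨k, rfl⟩)
  have key : ∀ k : ℕ, K ≤ k → ∀ t : M, p • t = 0 → t ∈ P k → t ∈ P (k + 1) := by
    intro k hk t hpt htk
    have : Finite (M ⧸ P (k + 1)) := Hfin _
    have : Finite (M ⧸ P (k + 2)) := Hfin _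
    set F : Sg k → Sg (k + 1) := fun a => ⟨ψ k a, hmaps k a a.2⟩ with hF
    have hFsurj : Function.Surjective F := fun b => by
      obtain ⟨a, ha, hab⟩ := hsurj k b b.2
      exact ⟨⟨a, ha⟩, Subtype.ext hab⟩
    have hbij : Function.Bijective F := by
      refine hFsurj.bijective_of_nat_card_le ?_
      have h1 : c k = c K := hstab k hk
      have h2 : c (k + 1) = c K := hstab (k + 1) (hk.trans (Nat.le_succ k))
      exact le_of_eq (h1.trans h2.symm)
    have heq : (⟨QuotientAddGroup.mk' (P (k + 1)) t, ⟨t, htk, rfl⟩⟩ : Sg k)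
        = ⟨0, zero_mem _⟩ := by
      apply hbij.injective
      apply Subtype.ext
      show ψ k (QuotientAddGroup.mk' (P (k + 1)) t) = ψ k 0
      rw [map_zero, QuotientAddGroup.mk'_apply, QuotientAddGroup.map_mk, f_apply, hpt]
      exact (QuotientAddGroup.eq_zero_iff (0 : M)).mpr (zero_mem _)
    have : QuotientAddGroup.mk' (P (k + 1)) t = 0 := congrArg Subtype.val heq
    exact (QuotientAddGroup.eq_zero_iff t).mp this
  obtain ⟨z, hz⟩ := hx (K + 1)
  set y : M := p ^ K • z with hy
  have hpy : p • y = x := by rw [hy, smul_smul, ← pow_succ']; exact hz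
  have hyK : y ∈ P K := ⟨z, rfl⟩
  have step : ∀ j : ℕ, K ≤ j → y ∈ P j → y ∈ P (j + 1) := by
    intro j hj hyj
    obtain ⟨w, hw⟩ := hx (j + 2)
    have hy' : p • (p ^ (j + 1) • w) = x := by rw [smul_smul, ← pow_succ']; exact hw
    have hdiff : p • (y - p ^ (j + 1) • w) = 0 := by rw [smul_sub, hpy, hy', sub_self]
    have hwj : (p ^ (j + 1) : ℕ) • w ∈ P j :=
      smulRange_anti (pow_dvd_pow p (Nat.le_succ j)) ⟨w, rfl⟩
    have hdmem : y - p ^ (j + 1) • w ∈ P j := sub_mem hyj hwj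
    have h1 : y - p ^ (j + 1) • w ∈ P (j + 1) := key j hj _ hdiff hdmem
    have h2 : (p ^ (j + 1) : ℕ) • w ∈ P (j + 1) := ⟨w, rfl⟩
    have : y = (y - p ^ (j + 1) • w) + p ^ (j + 1) • w := by abel
    rw [this]
    exact add_mem h1 h2
  have hall : ∀ j : ℕ, y ∈ P (K + j) := by
    intro j
    induction j with
    | zero => exact hyK
    | succ j ih =>
      exact step (K + j) (Nat.le_add_right _ _) ih
  refine ⟨y, hpy, fun k => ?_⟩
  rcases le_total k K with h | h
  · exact smulRange_anti (pow_dvd_pow p h) hyK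
  · have := hall (k - K)
    rwa [Nat.add_sub_cancel' h] at this

lemma prime_smul_mem_ulm (hfin : ∀ n : ℕ, 1 ≤ n → Finite (M ⧸ smulRange n M))
    {p : ℕ} (hp : p.Prime) {x : M} (hx : x ∈ ulmSubgroup M) :
    ∃ y ∈ ulmSubgroup M, p • y = x := by
  have hxp : ∀ k : ℕ, x ∈ smulRange (p ^ k) M := fun k =>
    hx (p ^ k) (Nat.one_le_pow _ _ hp.pos)
  obtain ⟨y, hpy, hy⟩ := prime_pow_descent hfin hp hxp
  refine ⟨y, ?_, hpy⟩
  have hq : ∀ q : ℕ, q.Prime → ∀ j : ℕ, ∃ w : M, q ^ j • w = y := by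
    intro q hq j
    by_cases hqp : q = p
    · subst hqp; exact hy j
    · have hco : Nat.Coprime p (q ^ j) :=
        ((Nat.coprime_primes hp hq).mpr (fun h => hqp h.symm)).pow_right j
      obtain ⟨z, hz⟩ := hx (p * q ^ j)
        (Nat.succ_le_of_lt (Nat.mul_pos hp.pos (pow_pos hq.pos j)))
      have h1 : p • (q ^ j • z) = x := by rw [smul_smul]; exact hz
      have h2 : p • (y - q ^ j • z) = 0 := by rw [smul_sub, hpy, h1, sub_self]
      obtain ⟨w, hw⟩ := torsion_smul_of_coprime hco h2
      refine ⟨z + w, ?_⟩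
      rw [smul_add, hw]
      abel
  have hall : ∀ n : ℕ, 1 ≤ n → ∃ w : M, n • w = y := by
    intro n
    induction n using Nat.recOnPosPrimePosCoprime with
    | prime_pow p' k hp' hk => exact fun _ => hq p' hp' k
    | zero => exact fun h => absurd h (by norm_num)
    | one => exact fun _ => ⟨y, one_smul _ _⟩
    | coprime a b ha hb hab iha ihb => exact fun _ => exists_smul_eq_of_coprime hab (iha ha.le) (ihb hb.le)
  exact hall

lemma ulm_divisible (hfin : ∀ n : ℕ, 1 ≤ n → Finite (M ⧸ smulRange n M)) :
    IsDivisibleSubgroup (ulmSubgroup M) := by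
  have main : ∀ n : ℕ, 1 ≤ n → ∀ x ∈ ulmSubgroup M, ∃ y ∈ ulmSubgroup M, n • y = x := by
    intro n
    induction n using Nat.strong_induction_on with
    | _ n ih =>
      intro hn x hx
      rcases eq_or_lt_of_le hn with h1 | h2
      · exact ⟨x, hx, by rw [← h1, one_smul]⟩
      · have hne1 : n ≠ 1 := by omega
        have hp := Nat.minFac_prime hne1
        have hdvd : n.minFac ∣ n := Nat.minFac_dvd n
        have hnm : n = (n / n.minFac) * n.minFac := (Nat.div_mul_cancel hdvd).symm
        have hmlt : n / n.minFac < n := Nat.div_lt_self (by omega) hp.one_lt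
        have hm1 : 1 ≤ n / n.minFac :=
          Nat.div_pos (Nat.minFac_le (by omega)) hp.pos
        obtain ⟨z, hz, hzx⟩ := ih _ hmlt hm1 x hx
        obtain ⟨y, hy, hyz⟩ := prime_smul_mem_ulm hfin hp hz
        exact ⟨y, hy, by rw [hnm, mul_smul, hyz, hzx]⟩
  exact main

end Main

/-- Let `M` be an abelian group such that `M/nM` is finite for every
`n ≥ 1`.  Then the first Ulm subgroup `U(M) = ⋂_{n ≥ 1} nM` equals the largest divisible
subgroup `M_div` of `M` (the sum of all divisible subgroups); equivalently, under this
hypothesis `U(M)` is itself a divisible subgroup. -/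
theorem ulm_eq_div_of_finite_quotients (M : Type u) [AddCommGroup M]
    (hfin : ∀ n : ℕ, 1 ≤ n → Finite (M ⧸ smulRange n M)) :
    ulmSubgroup M = sSup {D : AddSubgroup M | IsDivisibleSubgroup D} ∧
    IsDivisibleSubgroup (ulmSubgroup M) := by
  have hdiv : IsDivisibleSubgroup (ulmSubgroup M) := ulm_divisible hfin
  refine ⟨le_antisymm (le_sSup hdiv) (sSup_le ?_), hdiv⟩
  intro D hD x hxD
  intro n hn
  obtain ⟨y, _, hy⟩ := hD n hn x hxD
  exact ⟨y, hy⟩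
end

section
/- Let M be an abelian group, l a prime, and suppose there exists x ∈ U(M) with x ∉ lU(M). If n ≥ 1 and xₙ ∈ M satisfies lⁿxₙ = x, then the image of xₙ in M/U(M) has order exactly lⁿ. In particular, M/U(M) contains elements of arbitrarily high l-power order. -/
universe u

/-- Let `M` be an abelian group, `l` a prime, and suppose `x ∈ U(M)`
with `x ∉ l·U(M)`.  If `n ≥ 1` and `xₙ ∈ M` satisfies `lⁿ • xₙ = x`, then the image of
`xₙ` in `M/U(M)` has order exactly `lⁿ`.  In particular `M/U(M)` contains elements of
arbitrarily high `l`-power order. -/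
theorem order_of_root_of_nondivisible_ulm_elt
    {M : Type u} [AddCommGroup M] (l : ℕ) (hl : l.Prime) (x : M)
    (hx : x ∈ ulmSubgroup M) (hxl : ¬ ∃ y ∈ ulmSubgroup M, l • y = x) :
    (∀ n : ℕ, 1 ≤ n → ∀ xn : M, l ^ n • xn = x →
      addOrderOf (QuotientAddGroup.mk xn : M ⧸ ulmSubgroup M) = l ^ n) ∧
    (∀ n : ℕ, 1 ≤ n → ∃ z : M ⧸ ulmSubgroup M, addOrderOf z = l ^ n) := by
  haveI : Fact l.Prime := ⟨hl⟩
  have main : ∀ n : ℕ, 1 ≤ n → ∀ xn : M, l ^ n • xn = x →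
      addOrderOf (QuotientAddGroup.mk xn : M ⧸ ulmSubgroup M) = l ^ n := by
    intro n hn xn hxn
    obtain ⟨k, rfl⟩ : ∃ k, n = k + 1 := ⟨n - 1, (Nat.succ_pred_eq_of_pos hn).symm⟩
    refine addOrderOf_eq_prime_pow ?_ ?_
    · -- ¬ l ^ k • mk xn = 0
      intro h
      have hmem : l ^ k • xn ∈ ulmSubgroup M := by
        rw [← QuotientAddGroup.eq_zero_iff]
        simpa using h
      exact hxl ⟨l ^ k • xn, hmem, by rw [← hxn, smul_smul, ← pow_succ']⟩
    · -- l ^ (k+1) • mk xn = 0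
      show ((l ^ (k + 1) • xn : M) : M ⧸ ulmSubgroup M) = 0
      rw [hxn, QuotientAddGroup.eq_zero_iff]
      exact hx
  refine ⟨main, fun n hn => ?_⟩
  have hpos : 1 ≤ l ^ n := Nat.one_le_pow _ _ hl.pos
  obtain ⟨y, hy⟩ := hx (l ^ n) hpos
  exact ⟨QuotientAddGroup.mk y, main n hn y hy⟩
end

section
/- Let M be an abelian group such that M/nM is finite for every integer n ≥ 1, and suppose that TM = 0, where TM is the inverse limit over n (ordered by divisibility, with transition maps given by multiplication) of the n-torsion subgroups Ker(n : M → M). Then the first Ulm subgroup U(M) is uniquely divisible, i.e., it is a divisible, torsion-free abelian group (hence a ℚ-vector space). -/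
universe u

namespace UlmAux

variable {M : Type u} [AddCommGroup M]

def torsBy (m : ℕ) (M : Type u) [AddCommGroup M] : AddSubgroup M where
  carrier := {x | m • x = 0}
  zero_mem' := smul_zero m
  add_mem' := by
    intro a b ha hb
    simp only [Set.mem_setOf_eq, smul_add] at *
    rw [ha, hb, add_zero]
  neg_mem' := by
    intro a ha
    simp only [Set.mem_setOf_eq, smul_neg] at *
    rw [ha, neg_zero]

lemma mem_torsBy {m : ℕ} {x : M} : x ∈ torsBy m M ↔ m • x = 0 := Iff.rfl

lemma smulRange_le {n : ℕ} {s t : ℕ} (h : s ≤ t) :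
    smulRange (n ^ t) M ≤ smulRange (n ^ s) M := by
  rintro _ ⟨y, rfl⟩
  refine ⟨n ^ (t - s) • y, ?_⟩
  show n ^ s • n ^ (t - s) • y = n ^ t • y
  rw [smul_smul, ← pow_add]
  congr 2
  omega

/-- The key counting bound: the image of `M[n^k]` in `M ⧸ n^s M` has cardinality at most
`|M ⧸ n^k M|`, uniformly in `s`. -/
lemma card_img_le (n : ℕ) (hn : 1 ≤ n)
    (hfin : ∀ m : ℕ, 1 ≤ m → Finite (M ⧸ smulRange m M)) (k s : ℕ) :
    Nat.card ((torsBy (n ^ k) M).map (QuotientAddGroup.mk' (smulRange (n ^ s) M)))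
      ≤ Nat.card (M ⧸ smulRange (n ^ k) M) := by
  haveI F1 : Finite (M ⧸ smulRange (n ^ s) M) := hfin _ (Nat.one_le_pow _ _ (by omega))
  haveI F2 : Finite (M ⧸ smulRange (n ^ (s + k)) M) := hfin _ (Nat.one_le_pow _ _ (by omega))
  haveI F3 : Finite (M ⧸ smulRange (n ^ k) M) := hfin _ (Nat.one_le_pow _ _ (by omega))
  set R : ℕ → AddSubgroup M := fun t => smulRange (n ^ t) M with hR
  -- the multiplication-by-n^k map M ⧸ R s →+ M ⧸ R (s+k)
  set φ : M →+ M := AddMonoidHom.mk' (fun x => n ^ k • x) (fun a b => smul_add _ a b) with hφ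
  have hφle : R s ≤ (R (s + k)).comap φ := by
    rintro _ ⟨y, rfl⟩
    refine ⟨y, ?_⟩
    show n ^ (s + k) • y = φ (n ^ s • y)
    show n ^ (s + k) • y = n ^ k • n ^ s • y
    rw [smul_smul, ← pow_add, add_comm k s]
  set α := QuotientAddGroup.map (R s) (R (s + k)) φ hφle with hα
  -- image of torsion is inside ker α
  have himg_le_ker : (torsBy (n ^ k) M).map (QuotientAddGroup.mk' (R s)) ≤ α.ker := by
    rintro _ ⟨t, ht, rfl⟩
    have ht' : n ^ k • t = 0 := ht
    show α (QuotientAddGroup.mk' (R s) t) = 0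
    rw [QuotientAddGroup.map_mk']
    show (QuotientAddGroup.mk' (R (s+k))) (φ t) = 0
    have : φ t = 0 := ht'
    rw [this, map_zero]
  -- cardinalities
  have hcard1 : Nat.card (M ⧸ R s) = Nat.card ((M ⧸ R s) ⧸ α.ker) * Nat.card α.ker :=
    AddSubgroup.card_eq_card_quotient_mul_card_addSubgroup _
  have hcard1' : Nat.card ((M ⧸ R s) ⧸ α.ker) = Nat.card α.range :=
    Nat.card_congr (QuotientAddGroup.quotientKerEquivRange α).toEquiv
  have hrange : α.range = (R k).map (QuotientAddGroup.mk' (R (s + k))) := by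
    ext q
    constructor
    · rintro ⟨x, rfl⟩
      induction x using QuotientAddGroup.induction_on with
      | H y =>
        refine ⟨n ^ k • y, ⟨y, rfl⟩, ?_⟩
        show (QuotientAddGroup.mk' _) (n ^ k • y) = α ((QuotientAddGroup.mk' (R s)) y)
        rw [QuotientAddGroup.map_mk']
        rfl
    · rintro ⟨_, ⟨y, rfl⟩, rfl⟩
      refine ⟨(QuotientAddGroup.mk' (R s)) y, ?_⟩
      show α _ = _
      rw [QuotientAddGroup.map_mk']
      rfl
  have hRles : R (s + k) ≤ R k := smulRange_le (by omega)
  have hcard2 : Nat.card (M ⧸ R (s + k)) = Nat.card (M ⧸ R k) * Nat.card α.range := by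
    have h1 : Nat.card (M ⧸ R (s+k)) =
        Nat.card ((M ⧸ R (s+k)) ⧸ (R k).map (QuotientAddGroup.mk' (R (s+k)))) *
          Nat.card ((R k).map (QuotientAddGroup.mk' (R (s+k)))) :=
      AddSubgroup.card_eq_card_quotient_mul_card_addSubgroup _
    have h2 : Nat.card ((M ⧸ R (s+k)) ⧸ (R k).map (QuotientAddGroup.mk' (R (s+k)))) =
        Nat.card (M ⧸ R k) :=
      Nat.card_congr (QuotientAddGroup.quotientQuotientEquivQuotient (R (s+k)) (R k) hRles).toEquiv
    rw [h1, h2, hrange]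
  -- q s ≤ q (s+k)
  have hsurj : Nat.card (M ⧸ R s) ≤ Nat.card (M ⧸ R (s + k)) := by
    have hle2 : R (s + k) ≤ (R s).comap (AddMonoidHom.id M) := fun x hx => smulRange_le (by omega) hx
    refine Nat.card_le_card_of_surjective (QuotientAddGroup.map (R (s+k)) (R s) (AddMonoidHom.id M) hle2) ?_
    intro q
    induction q using QuotientAddGroup.induction_on with
    | H y => exact ⟨(QuotientAddGroup.mk' _) y, by rw [QuotientAddGroup.map_mk']; rfl⟩
  -- conclude: card ker ≤ card (M ⧸ R k)
  have hker_le : Nat.card α.ker ≤ Nat.card (M ⧸ R k) := by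
    have hpos : 0 < Nat.card α.range := Nat.card_pos
    have heq : Nat.card α.ker * Nat.card α.range = Nat.card (M ⧸ R s) := by
      rw [hcard1, hcard1']; ring
    have h3 : Nat.card α.ker * Nat.card α.range ≤ Nat.card (M ⧸ R k) * Nat.card α.range := by
      rw [heq]
      calc Nat.card (M ⧸ R s) ≤ Nat.card (M ⧸ R (s+k)) := hsurj
        _ = Nat.card (M ⧸ R k) * Nat.card α.range := hcard2
    exact Nat.le_of_mul_le_mul_right h3 hpos
  -- image injects into ker
  refine le_trans ?_ hker_le
  haveI : Finite α.ker := Subtype.finite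
  exact Nat.card_le_card_of_injective
    (fun x => (⟨x.1, himg_le_ker x.2⟩ : α.ker))
    (fun a b hab => Subtype.ext (by simpa using congrArg Subtype.val hab))

lemma event_const (d : ℕ → ℕ) (hmono : ∀ s, d s ≤ d (s + 1)) (C : ℕ)
    (hbound : ∀ s, d s ≤ C) : ∃ S, ∀ s, S ≤ s → d s = d S := by
  classical
  have hmono' : ∀ s t, s ≤ t → d s ≤ d t := fun s t hst =>
    monotone_nat_of_le_succ hmono hst
  set F : Finset ℕ := (Finset.range (C + 1)).filter (fun v => ∃ s, d s = v) with hF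
  have hmem : ∀ s, d s ∈ F := fun s => by
    simp only [hF, Finset.mem_filter, Finset.mem_range]
    exact ⟨Nat.lt_succ_of_le (hbound s), s, rfl⟩
  have hne : F.Nonempty := ⟨d 0, hmem 0⟩
  obtain ⟨s₀, hs₀⟩ : ∃ s₀, d s₀ = F.max' hne := by
    have := F.max'_mem hne
    simp only [hF, Finset.mem_filter, Finset.mem_range] at this
    obtain ⟨_, s₀, h⟩ := this
    exact ⟨s₀, h⟩
  refine ⟨s₀, fun s hs => le_antisymm ?_ (hmono' _ _ hs)⟩
  rw [hs₀]
  exact F.le_max' _ (hmem s)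

/-- Stabilization: there is a level `S` such that any `n^k`-torsion element divisible by
`n^S` is divisible by every power of `n`. -/
lemma stab (n : ℕ) (hn : 1 ≤ n)
    (hfin : ∀ m : ℕ, 1 ≤ m → Finite (M ⧸ smulRange m M)) (k : ℕ) :
    ∃ S : ℕ, ∀ v : M, n ^ k • v = 0 → v ∈ smulRange (n ^ S) M →
      ∀ s, v ∈ smulRange (n ^ s) M := by
  classical
  haveI F : ∀ t, Finite (M ⧸ smulRange (n ^ t) M) :=
    fun t => hfin _ (Nat.one_le_pow _ _ (by omega))
  set R : ℕ → AddSubgroup M := fun t => smulRange (n ^ t) M with hR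
  set T : AddSubgroup M := torsBy (n ^ k) M with hT
  have himgdef : ∀ s : ℕ, True := fun _ => trivial
  set d : ℕ → ℕ := fun s => Nat.card (T.map (QuotientAddGroup.mk' (R s))) with hd
  haveI Fimg : ∀ s, Finite (T.map (QuotientAddGroup.mk' (R s))) := fun s => Subtype.finite
  -- projections between images
  have hπle : ∀ s : ℕ, R (s+1) ≤ (R s).comap (AddMonoidHom.id M) :=
    fun s x hx => smulRange_le (by omega) hx
  set π : (s : ℕ) → (M ⧸ R (s+1)) →+ (M ⧸ R s) :=
    fun s => QuotientAddGroup.map (R (s+1)) (R s) (AddMonoidHom.id M) (hπle s) with hπ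
  have hmapsTo : ∀ s (v : M ⧸ R (s+1)), v ∈ T.map (QuotientAddGroup.mk' (R (s+1))) →
      π s v ∈ T.map (QuotientAddGroup.mk' (R s)) := by
    rintro s _ ⟨t, ht, rfl⟩
    refine ⟨t, ht, ?_⟩
    rw [hπ]
    rw [QuotientAddGroup.map_mk']
    rfl
  set σ : (s : ℕ) → (T.map (QuotientAddGroup.mk' (R (s+1)))) → (T.map (QuotientAddGroup.mk' (R s))) :=
    fun s x => ⟨π s x.1, hmapsTo s x.1 x.2⟩ with hσ
  have hσsurj : ∀ s, Function.Surjective (σ s) := by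
    rintro s ⟨_, t, ht, rfl⟩
    refine ⟨⟨(QuotientAddGroup.mk' (R (s+1))) t, ⟨t, ht, rfl⟩⟩, ?_⟩
    apply Subtype.ext
    show π s _ = _
    rw [QuotientAddGroup.map_mk']
    rfl
  have hdmono : ∀ s, d s ≤ d (s + 1) := fun s =>
    Nat.card_le_card_of_surjective (σ s) (hσsurj s)
  have hdbound : ∀ s, d s ≤ Nat.card (M ⧸ smulRange (n ^ k) M) :=
    fun s => card_img_le n hn hfin k s
  obtain ⟨S, hS⟩ := event_const d hdmono _ hdbound
  refine ⟨S, fun v hv hvS s => ?_⟩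
  have hvT : v ∈ T := hv
  have hstep : ∀ s, S ≤ s → v ∈ R s → v ∈ R (s + 1) := by
    intro s hSs hvs
    have hcard : Nat.card (T.map (QuotientAddGroup.mk' (R (s+1)))) =
        Nat.card (T.map (QuotientAddGroup.mk' (R s))) := by
      have e1 : d (s+1) = d S := hS (s+1) (by omega)
      have e2 : d s = d S := hS s (by omega)
      show d (s+1) = d s
      omega
    have hbij := (Nat.bijective_iff_surjective_and_card (σ s)).mpr ⟨hσsurj s, hcard⟩
    have hu : ((QuotientAddGroup.mk' (R (s+1))) v) ∈ T.map (QuotientAddGroup.mk' (R (s+1))) :=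
      ⟨v, hvT, rfl⟩
    have hσu : σ s ⟨_, hu⟩ = 0 := by
      apply Subtype.ext
      show π s ((QuotientAddGroup.mk' (R (s+1))) v) = 0
      rw [QuotientAddGroup.map_mk']
      show ((v : M) : M ⧸ R s) = 0
      exact (QuotientAddGroup.eq_zero_iff v).mpr hvs
    have hσ0 : σ s 0 = 0 := by
      apply Subtype.ext
      show π s (0 : M ⧸ R (s+1)) = 0
      exact map_zero _
    have := hbij.injective (hσu.trans hσ0.symm)
    have hval : ((QuotientAddGroup.mk' (R (s+1))) v) = 0 := congrArg Subtype.val this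
    exact (QuotientAddGroup.eq_zero_iff v).mp hval
  rcases Nat.le_total s S with h | h
  · exact smulRange_le h hvS
  · induction s, h using Nat.le_induction with
    | base => exact hvS
    | succ s hSs ih => exact hstep s hSs ih

lemma smul_eq_smul_mod {a b d : ℕ} {x : M} (h : a ≡ b [MOD d]) (hx : d • x = 0) :
    a • x = b • x := by
  wlog hab : a ≤ b generalizing a b
  · exact (this h.symm (le_of_not_ge hab)).symm
  obtain ⟨u, hu⟩ := (Nat.modEq_iff_dvd' hab).mp h
  have hb : b = a + d * u := by omega
  rw [hb, add_smul, mul_comm d u, mul_smul, hx, smul_zero, add_zero]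

lemma mem_ulm {x : M} : x ∈ ulmSubgroup M ↔ ∀ m : ℕ, 1 ≤ m → ∃ y : M, m • y = x :=
  Iff.rfl

/-- Decomposition `m = a * b` with `a = gcd(m, n^m)` dividing `n^m` and `b` coprime to `n`. -/
lemma npart_coprime {n m : ℕ} (hn : 1 ≤ n) (hm : 1 ≤ m) :
    Nat.Coprime (m / Nat.gcd m (n ^ m)) n := by
  set a := Nat.gcd m (n ^ m) with ha
  set b := m / a with hb
  have hm0 : m ≠ 0 := by omega
  have hn0 : n ≠ 0 := by omega
  have hnm0 : n ^ m ≠ 0 := pow_ne_zero _ hn0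
  have hadvd : a ∣ m := Nat.gcd_dvd_left _ _
  have ha0 : a ≠ 0 := by
    have := Nat.gcd_pos_of_pos_left (n ^ m) (by omega : 0 < m)
    omega
  have hab : a * b = m := Nat.mul_div_cancel' hadvd
  have hb0 : b ≠ 0 := by
    intro h
    rw [h, mul_zero] at hab
    omega
  by_contra hcop
  obtain ⟨q, hq, hqb, hqn⟩ := Nat.Prime.not_coprime_iff_dvd.mp hcop
  have hfa : a.factorization = m.factorization ⊓ (n ^ m).factorization :=
    Nat.factorization_gcd hm0 hnm0
  have hfq : a.factorization q = m.factorization q := by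
    rw [hfa]
    simp only [Finsupp.inf_apply, Nat.factorization_pow, Finsupp.smul_apply, smul_eq_mul]
    have h1 : m.factorization q < m := Nat.factorization_lt q hm0
    have h2 : 1 ≤ n.factorization q := (hq.dvd_iff_one_le_factorization hn0).mp hqn
    have : m.factorization q ≤ m * n.factorization q := by nlinarith
    omega
  have hfm : m.factorization q = a.factorization q + b.factorization q := by
    rw [← hab, Nat.factorization_mul ha0 hb0]; simp
  have hqb2 : 1 ≤ b.factorization q := (hq.dvd_iff_one_le_factorization hb0).mp hqb
  omega

lemma exists_inv {b N : ℕ} (hN : 1 ≤ N) (h : Nat.Coprime b N) :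
    ∃ c : ℕ, b * c ≡ 1 [MOD N] := by
  refine ⟨b ^ (N.totient - 1), ?_⟩
  have ht := Nat.ModEq.pow_totient h
  have h1 : 1 ≤ N.totient := Nat.totient_pos.mpr (by omega)
  have : b * b ^ (N.totient - 1) = b ^ N.totient := by
    rw [← pow_succ']
    congr 1
    omega
  rw [this]
  exact ht

/-- A torsion element divisible by every power of `n` lies in the Ulm subgroup. -/
lemma deep_mem_ulm {n : ℕ} (hn : 1 ≤ n) {k : ℕ} {x : M} (hx : n ^ k • x = 0)
    (hd : ∀ s, x ∈ smulRange (n ^ s) M) : x ∈ ulmSubgroup M := by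
  intro m hm
  obtain ⟨z, hz⟩ := hd (m + k)
  have hz : n ^ (m + k) • z = x := hz
  set a := Nat.gcd m (n ^ m) with hadef
  set b := m / a with hbdef
  have hadvd : a ∣ m := Nat.gcd_dvd_left _ _
  have hab : a * b = m := Nat.mul_div_cancel' hadvd
  have hcop : Nat.Coprime b n := npart_coprime hn hm
  have ha0 : 0 < a := Nat.gcd_pos_of_pos_left (n ^ m) (by omega)
  have hapow : a ∣ n ^ (m + k) :=
    dvd_trans (Nat.gcd_dvd_right m (n ^ m)) (pow_dvd_pow n (by omega))
  set e := n ^ (m + k) / a with hedef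
  have hae : a * e = n ^ (m + k) := Nat.mul_div_cancel' hapow
  set w := e • z with hwdef
  have haw : a • w = x := by
    rw [hwdef, smul_smul, hae, hz]
  set Q := a * n ^ k with hQdef
  have hQw : Q • w = 0 := by
    rw [hQdef, mul_comm, mul_smul, haw, hx]
  have hQ1 : 1 ≤ Q := by
    have : 1 ≤ n ^ k := Nat.one_le_pow _ _ (by omega)
    calc 1 ≤ a * 1 := by omega
      _ ≤ a * n ^ k := by exact Nat.mul_le_mul_left a this
  have hcopQ : Nat.Coprime b Q := by
    have h1 : Nat.Coprime b a :=
      Nat.Coprime.coprime_dvd_right (Nat.gcd_dvd_right m (n ^ m)) (hcop.pow_right m)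
    exact h1.mul_right (hcop.pow_right k)
  obtain ⟨c, hc⟩ := exists_inv hQ1 hcopQ
  refine ⟨c • w, ?_⟩
  rw [smul_smul, ← hab]
  rw [show a * b * c = a * (b * c) by ring, mul_smul,
    smul_eq_smul_mod hc hQw, one_smul, haw]

/-- Torsion-freeness of the Ulm subgroup, from `TM = 0`. -/
lemma ulm_torsionfree {n : ℕ} (hn : 1 ≤ n)
    (hfin : ∀ m : ℕ, 1 ≤ m → Finite (M ⧸ smulRange m M))
    (hT : ∀ f : ℕ+ → M, (∀ n : ℕ+, (n : ℕ) • f n = 0) →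
      (∀ m n : ℕ+, (m : ℕ) ∣ (n : ℕ) → ((n : ℕ) / (m : ℕ)) • f n = f m) →
      ∀ n : ℕ+, f n = 0) :
    ∀ x : M, n • x = 0 → x ∈ ulmSubgroup M → x = 0 := by
  classical
  intro x hx hxu
  -- Lifting: an `n^(k+1)`-torsion Ulm element is `n` times an `n^(k+2)`-torsion Ulm element.
  have hlift : ∀ (k : ℕ) (w : M), n ^ (k+1) • w = 0 → w ∈ ulmSubgroup M →
      ∃ w', n • w' = w ∧ n ^ (k+2) • w' = 0 ∧ w' ∈ ulmSubgroup M := by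
    intro k w hw hwu
    obtain ⟨S, hS⟩ := stab n hn hfin (k+2)
    obtain ⟨z, hz⟩ := hwu (n ^ (S+1)) (Nat.one_le_pow _ _ (by omega))
    have htor : n ^ (k+2) • (n ^ S • z) = 0 := by
      rw [smul_smul, ← pow_add, show k + 2 + S = (k+1) + (S+1) by ring, pow_add,
        mul_smul, hz, hw]
    refine ⟨n ^ S • z, ?_, htor, ?_⟩
    · rw [smul_smul, ← pow_succ']
      exact hz
    · exact deep_mem_ulm hn htor (hS _ htor ⟨z, rfl⟩)
  -- the chain G with G 0 = x, n • G (k+1) = G k, consisting of torsion Ulm elements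
  have hstep : ∀ (k : ℕ) (w : M), ∃ w',
      (n ^ (k+1) • w = 0 ∧ w ∈ ulmSubgroup M) →
      (n • w' = w ∧ n ^ (k+2) • w' = 0 ∧ w' ∈ ulmSubgroup M) := by
    intro k w
    by_cases h : n ^ (k+1) • w = 0 ∧ w ∈ ulmSubgroup M
    · obtain ⟨w', h1, h2, h3⟩ := hlift k w h.1 h.2
      exact ⟨w', fun _ => ⟨h1, h2, h3⟩⟩
    · exact ⟨0, fun hc => absurd hc h⟩
  choose step hstepspec using hstep
  set G : ℕ → M := fun k => Nat.rec x (fun k g => step k g) k with hG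
  have hGprop : ∀ k, n ^ (k+1) • G k = 0 ∧ G k ∈ ulmSubgroup M := by
    intro k
    induction k with
    | zero => exact ⟨by rw [pow_one]; exact hx, hxu⟩
    | succ k ih =>
      have h := hstepspec k (G k) ih
      exact ⟨h.2.1, h.2.2⟩
  have hGlink : ∀ k, n • G (k+1) = G k := fun k => (hstepspec k (G k) (hGprop k)).1
  have hGpow : ∀ (j i : ℕ), n ^ j • G (i + j) = G i := by
    intro j
    induction j with
    | zero => intro i; simp
    | succ j ih =>
      intro i
      rw [show i + (j+1) = (i + j) + 1 by ring, pow_succ]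
      rw [mul_smul, hGlink (i+j)]
      exact ih i
  -- number theoretic gadgets
  set A : ℕ → ℕ := fun m => Nat.gcd m (n ^ m) with hA
  set B : ℕ → ℕ := fun m => m / A m with hB
  set E : ℕ → ℕ := fun m => n ^ (m+1) / A m with hE
  have hAdvd : ∀ m, A m ∣ m := fun m => Nat.gcd_dvd_left _ _
  have hAB : ∀ m, A m * B m = m := fun m => Nat.mul_div_cancel' (hAdvd m)
  have hApow : ∀ m, A m ∣ n ^ (m+1) := fun m =>
    dvd_trans (Nat.gcd_dvd_right m (n^m)) (pow_dvd_pow n (by omega))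
  have hAE : ∀ m, A m * E m = n ^ (m+1) := fun m => Nat.mul_div_cancel' (hApow m)
  have hA0 : ∀ m, 1 ≤ m → 0 < A m := fun m hm =>
    Nat.gcd_pos_of_pos_left _ (by omega)
  have hBcop : ∀ m, 1 ≤ m → Nat.Coprime (B m) n := fun m hm => npart_coprime hn hm
  have hCex : ∀ m : ℕ, ∃ c, 1 ≤ m → B m * c ≡ 1 [MOD n ^ (m+1)] := by
    intro m
    by_cases hm : 1 ≤ m
    · obtain ⟨c, hc⟩ := exists_inv (b := B m) (N := n ^ (m+1))
        (Nat.one_le_pow _ _ (by omega)) ((hBcop m hm).pow_right (m+1))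
      exact ⟨c, fun _ => hc⟩
    · exact ⟨1, fun h => absurd h hm⟩
  choose C hC using hCex
  -- the compatible family
  set f : ℕ+ → M := fun m => (C (m:ℕ) * E (m:ℕ)) • G (m:ℕ) with hf
  have htor : ∀ m : ℕ+, (m : ℕ) • f m = 0 := by
    intro mp
    set k := (mp : ℕ) with hk
    show k • ((C k * E k) • G k) = 0
    rw [smul_smul]
    have hcoef : k * (C k * E k) = (B k * C k) * (A k * E k) := by
      nth_rewrite 1 [← hAB k]
      ring
    rw [hcoef, hAE k, mul_smul, (hGprop k).1, smul_zero]
  have hcompat : ∀ mp m'p : ℕ+, (mp : ℕ) ∣ (m'p : ℕ) → ((m'p : ℕ) / (mp : ℕ)) • f m'p = f mp := by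
    intro mp m'p hdvd
    set k := (mp : ℕ) with hk
    set k' := (m'p : ℕ) with hk'
    have hk1 : 1 ≤ k := mp.pos
    have hk'1 : 1 ≤ k' := m'p.pos
    have hkk' : k ≤ k' := Nat.le_of_dvd (by omega) hdvd
    have haa : A k ∣ A k' := Nat.dvd_gcd (dvd_trans (hAdvd k) hdvd)
      (dvd_trans (Nat.gcd_dvd_right k (n^k)) (pow_dvd_pow n hkk'))
    have hbk : B k ∣ k := ⟨A k, by nth_rewrite 1 [← hAB k]; ring⟩
    have hcopA : Nat.Coprime (B k) (A k') :=
      Nat.Coprime.coprime_dvd_right (Nat.gcd_dvd_right k' (n ^ k')) ((hBcop k hk1).pow_right k')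
    have hbb : B k ∣ B k' := by
      have h1 : B k ∣ A k' * B k' := by rw [hAB k']; exact dvd_trans hbk hdvd
      exact hcopA.dvd_of_dvd_mul_left h1
    have hA0k : 0 < A k := hA0 k hk1
    have hratio : k' / k = (A k' / A k) * (B k' / B k) := by
      have e1 : A k' / A k * A k = A k' := Nat.div_mul_cancel haa
      have e2 : B k' / B k * B k = B k' := Nat.div_mul_cancel hbb
      refine Nat.div_eq_of_eq_mul_left (by omega) ?_
      calc k' = A k' * B k' := (hAB k').symm
        _ = (A k' / A k * A k) * (B k' / B k * B k) := by rw [e1, e2]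
        _ = (A k' / A k) * (B k' / B k) * (A k * B k) := by ring
        _ = (A k' / A k) * (B k' / B k) * k := by rw [hAB k]
    have hEE : E k * n ^ (k' - k) = (A k' / A k) * E k' := by
      have e1 : A k' / A k * A k = A k' := Nat.div_mul_cancel haa
      apply Nat.eq_of_mul_eq_mul_left hA0k
      calc A k * (E k * n ^ (k' - k)) = (A k * E k) * n ^ (k' - k) := by ring
        _ = n ^ (k+1) * n ^ (k' - k) := by rw [hAE k]
        _ = n ^ (k' + 1) := by rw [← pow_add]; congr 1; omega
        _ = A k' * E k' := (hAE k').symm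
        _ = (A k' / A k * A k) * E k' := by rw [e1]
        _ = A k * (A k' / A k * E k') := by ring
    have hmodA : (B k' / B k) * C k' ≡ C k [MOD A k] := by
      have hdA : A k ∣ n ^ (k + 1) := hApow k
      have hdA' : A k ∣ n ^ (k' + 1) :=
        dvd_trans (Nat.gcd_dvd_right k (n ^ k)) (pow_dvd_pow n (by omega))
      have m2 : B k' * C k' ≡ 1 [MOD A k] := Nat.ModEq.of_dvd hdA' (hC k' hk'1)
      have m3 : B k * C k ≡ 1 [MOD A k] := Nat.ModEq.of_dvd hdA (hC k hk1)
      have m1 : B k * ((B k' / B k) * C k') = B k' * C k' := by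
        have e2 : B k * (B k' / B k) = B k' := Nat.mul_div_cancel' hbb
        rw [← mul_assoc, e2]
      have hmm : B k * ((B k' / B k) * C k') ≡ B k * C k [MOD A k] := by
        rw [m1]; exact m2.trans m3.symm
      have hgcd : Nat.gcd (A k) (B k) = 1 := by
        have h1 : Nat.Coprime (B k) (A k) :=
          Nat.Coprime.coprime_dvd_right (Nat.gcd_dvd_right k (n ^ k)) ((hBcop k hk1).pow_right k)
        exact Nat.coprime_comm.mp h1
      exact Nat.ModEq.cancel_left_of_coprime hgcd hmm
    have hscaled : ((A k' / A k) * E k') * ((B k' / B k) * C k') ≡ ((A k' / A k) * E k') * C k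
        [MOD n ^ (k' + 1)] := by
      have h := Nat.ModEq.mul_left' (c := (A k' / A k) * E k') hmodA
      have emod : (A k' / A k) * E k' * A k = n ^ (k' + 1) := by
        have e1 : A k' / A k * A k = A k' := Nat.div_mul_cancel haa
        calc (A k' / A k) * E k' * A k = (A k' / A k * A k) * E k' := by ring
          _ = A k' * E k' := by rw [e1]
          _ = n ^ (k' + 1) := hAE k'
      rwa [emod] at h
    show (k' / k) • ((C k' * E k') • G k') = (C k * E k) • G k
    have hGk : G k = n ^ (k' - k) • G k' := by
      have h := hGpow (k' - k) k
      rw [show k + (k' - k) = k' by omega] at h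
      exact h.symm
    rw [hGk, smul_smul, smul_smul]
    have hL : (k' / k) * (C k' * E k') = ((A k' / A k) * E k') * ((B k' / B k) * C k') := by
      rw [hratio]; ring
    have hR : (C k * E k) * n ^ (k' - k) = ((A k' / A k) * E k') * C k := by
      calc (C k * E k) * n ^ (k' - k) = C k * (E k * n ^ (k' - k)) := by ring
        _ = C k * ((A k' / A k) * E k') := by rw [hEE]
        _ = ((A k' / A k) * E k') * C k := by ring
    rw [hL, hR]
    exact smul_eq_smul_mod hscaled (hGprop k').1
  -- apply TM = 0 at n
  have hzero := hT f htor hcompat ⟨n, by omega⟩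
  have hAn : A n = n := Nat.gcd_eq_left (dvd_pow_self n (by omega))
  have hEn : E n = n ^ n := by
    apply Nat.eq_of_mul_eq_mul_left (show 0 < n by omega)
    have h1 := hAE n
    rw [hAn] at h1
    rw [h1, pow_succ']
  have hBn : B n = 1 := by
    show n / A n = 1
    rw [hAn]
    exact Nat.div_self (by omega)
  have hCn : C n ≡ 1 [MOD n] := by
    have h := hC n (by omega)
    rw [hBn, one_mul] at h
    exact Nat.ModEq.of_dvd (dvd_pow_self n (by omega)) h
  have hGn : n ^ n • G n = x := by
    have h := hGpow n 0
    simp at h; exact h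
  have hfn : f ⟨n, by omega⟩ = C n • x := by
    show (C n * E n) • G n = C n • x
    rw [hEn, mul_smul, hGn]
  calc x = (1:ℕ) • x := (one_smul ℕ x).symm
    _ = C n • x := (smul_eq_smul_mod hCn hx).symm
    _ = f ⟨n, by omega⟩ := hfn.symm
    _ = 0 := hzero

end UlmAux

/-- Let `M` be an abelian group such that `M/nM` is finite for every
`n ≥ 1`, and suppose `TM = 0`, where `TM = lim_n Ker(n : M → M)` is the inverse limit,
over positive integers `n` ordered by divisibility, of the `n`-torsion subgroups, the
transition map `Ker(n) → Ker(m)` for `m ∣ n` being multiplication by `n/m`.  (Here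
`TM = 0` is expressed as: every compatible family of torsion elements is zero.)  Then
the first Ulm subgroup `U(M)` is uniquely divisible: for every `n ≥ 1`, multiplication
by `n` is a bijection of `U(M)`, so `U(M)` is a divisible torsion-free group, i.e., a
`ℚ`-vector space. -/
theorem ulm_uniquely_divisible_of_torsionlimit_zero
    {M : Type u} [AddCommGroup M]
    (hfin : ∀ n : ℕ, 1 ≤ n → Finite (M ⧸ smulRange n M))
    (hT : ∀ f : ℕ+ → M, (∀ n : ℕ+, (n : ℕ) • f n = 0) →
      (∀ m n : ℕ+, (m : ℕ) ∣ (n : ℕ) → ((n : ℕ) / (m : ℕ)) • f n = f m) →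
      ∀ n : ℕ+, f n = 0) :
    ∀ n : ℕ, 1 ≤ n → Function.Bijective (fun x : ulmSubgroup M => n • x) := by
  intro n hn
  constructor
  · -- injectivity
    intro x y hxy
    have hval : n • (x : M) = n • (y : M) := by
      have h := congrArg (Subtype.val) hxy
      simpa using h
    have hd : n • ((x : M) - (y : M)) = 0 := by rw [smul_sub, hval, sub_self]
    have hdu : ((x : M) - (y : M)) ∈ ulmSubgroup M := sub_mem x.2 y.2
    have h0 := UlmAux.ulm_torsionfree hn hfin hT _ hd hdu
    exact Subtype.ext (sub_eq_zero.mp h0)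
  · -- surjectivity
    intro x
    obtain ⟨S, hS⟩ := UlmAux.stab n hn hfin 1
    obtain ⟨z, hz0⟩ := x.2 (n ^ (S+1)) (Nat.one_le_pow _ _ (by omega))
    have hz : n ^ (S+1) • z = (x : M) := hz0
    set y := n ^ S • z with hy
    have hy1 : n • y = (x : M) := by rw [hy, smul_smul, ← pow_succ']; exact hz
    have hyU : y ∈ ulmSubgroup M := by
      intro m hm
      obtain ⟨w, hw0⟩ := x.2 (n ^ (S+1) * m)
        (by
          have h1 : 1 ≤ n ^ (S+1) := Nat.one_le_pow _ _ (by omega)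
          calc 1 ≤ 1 * 1 := by omega
            _ ≤ n ^ (S+1) * m := Nat.mul_le_mul h1 hm)
      have hw : (n ^ (S+1) * m) • w = (x : M) := hw0
      set y' := (n ^ S * m) • w with hy'
      have hy'1 : n • y' = (x : M) := by
        rw [hy', smul_smul, ← mul_assoc, ← pow_succ']
        exact hw
      have hv1 : n ^ 1 • (y - y') = 0 := by
        rw [pow_one, smul_sub, hy1, hy'1, sub_self]
      have hv2 : (y - y') ∈ smulRange (n ^ S) M := by
        apply sub_mem
        · exact ⟨z, rfl⟩
        · exact ⟨m • w, by show n ^ S • m • w = y'; rw [smul_smul]⟩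
      have hdeep := hS _ hv1 hv2
      have hvU := UlmAux.deep_mem_ulm hn hv1 hdeep
      have hv0 : y - y' = 0 := UlmAux.ulm_torsionfree hn hfin hT _
        (by rw [pow_one] at hv1; exact hv1) hvU
      refine ⟨n ^ S • w, ?_⟩
      rw [smul_smul, mul_comm m (n ^ S)]
      show y' = y
      exact (sub_eq_zero.mp hv0).symm
    refine ⟨⟨y, hyU⟩, ?_⟩
    exact Subtype.ext hy1
end

section
/- Let φ : M × N → ℤ be a bi-additive (ℤ-bilinear) pairing of abelian groups, and let l be a prime. Suppose the induced ℤ_l-bilinear pairing φ_l : M_l × N_l → ℤ_l on the l-adic completions has trivial left kernel (i.e., if x ∈ M_l satisfies φ_l(x, y) = 0 for all y ∈ N_l, then x = 0). If N/lN is finite and ⋂_{n ≥ 1} lⁿM = 0, then M is a free abelian group of finite rank. -/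
universe u v

/-- Let `φ : M × N → ℤ` be a bi-additive pairing of abelian groups and
`l` a prime.  Suppose the induced pairing `φ_l : M_l × N_l → ℤ_l` on the `l`-adic
completions has trivial left kernel.  (Elements of `M_l = lim_n M/lⁿM` are represented
by sequences `x : ℕ → M` with `x (n+1) ≡ x n mod lⁿM`; such an `x` pairs to zero with
every element of `N_l` exactly when `lⁿ ∣ φ(x n, y)` for all `n` and all `y ∈ N`, and
it is the zero element of `M_l` exactly when `x n ∈ lⁿM` for all `n`.  The hypothesis
`hker` below is this triviality of the left kernel of `φ_l`.)  If `N/lN` is finite and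
`⋂_{n ≥ 1} lⁿM = 0`, then `M` is a free abelian group of finite rank. -/
theorem free_of_pairing_with_trivial_left_kernel
    {M : Type u} {N : Type v} [AddCommGroup M] [AddCommGroup N]
    (φ : M →+ N →+ ℤ) (l : ℕ) (hl : l.Prime)
    (hker : ∀ x : ℕ → M, (∀ n : ℕ, x (n + 1) - x n ∈ smulRange (l ^ n) M) →
      (∀ (n : ℕ) (y : N), ((l : ℤ) ^ n) ∣ φ (x n) y) →
      ∀ n : ℕ, x n ∈ smulRange (l ^ n) M)
    (hfin : Finite (N ⧸ smulRange l N))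
    (hsep : ∀ x : M, (∀ n : ℕ, x ∈ smulRange (l ^ n) M) → x = 0) :
    ∃ r : ℕ, Nonempty (M ≃+ (Fin r → ℤ)) := by
  classical
  haveI : Fintype (N ⧸ smulRange l N) := Fintype.ofFinite _
  set Q := N ⧸ smulRange l N with hQ
  -- the comparison map to a finite free module
  let f : M →ₗ[ℤ] (Q → ℤ) :=
    { toFun := fun x q => φ x q.out
      map_add' := by intro a b; funext q; simp
      map_smul' := by intro c a; funext q; simp }
  -- key divisibility statement
  have key : ∀ x : M, (∀ q : Q, φ x q.out = 0) →
      ∀ (n : ℕ) (y : N), ((l : ℤ) ^ n) ∣ φ x y := by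
    intro x hx
    have hstep : ∀ y : N, ∃ z : N, φ x y = l * φ x z := by
      intro y
      have h1 : -(QuotientAddGroup.mk y : Q).out + y ∈ smulRange l N := by
        rw [← QuotientAddGroup.eq]
        exact Quotient.out_eq _
      obtain ⟨z, hz⟩ := h1
      refine ⟨z, ?_⟩
      have hz' : l • z = -(QuotientAddGroup.mk y : Q).out + y := hz
      have hy : y = (QuotientAddGroup.mk y : Q).out + l • z := by
        rw [hz']; abel
      rw [hy, map_add, hx, map_nsmul, zero_add, nsmul_eq_mul]
    intro n
    induction n with
    | zero => intro y; simp only [pow_zero]; exact one_dvd _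
    | succ n ih =>
      intro y
      obtain ⟨z, hz⟩ := hstep y
      rw [hz, pow_succ']
      exact mul_dvd_mul_left _ (ih z)
  -- injectivity of f
  have hinj : Function.Injective f := by
    rw [injective_iff_map_eq_zero]
    intro x hx
    have hx' : ∀ q : Q, φ x q.out = 0 := fun q => congrFun hx q
    have hdvd := key x hx'
    have hmem := hker (fun _ => x) (fun n => by simpa using zero_mem (smulRange (l ^ n) M))
      (fun n y => hdvd n y)
    exact hsep x hmem
  -- conclude freeness
  obtain ⟨r, b⟩ := Submodule.basisOfPid (Pi.basisFun ℤ Q) (LinearMap.range f)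
  let e : M ≃ₗ[ℤ] LinearMap.range f := LinearEquiv.ofInjective f hinj
  let b' : Module.Basis (Fin r) ℤ M := b.map e.symm
  exact ⟨r, ⟨b'.equivFun.toAddEquiv⟩⟩
end
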